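/- arXiv:1908.00567 — 4 statements merged into one kernel-verified Lean document; each statement's English description precedes it below -/
import Mathlib

section
/- Let Q be a finite acyclic quiver and i a vertex of Q, and let e_i denote the simple dimension vector with value 1 at vertex i and 0 elsewhere. For any univariate polynomials f₁,…,f_r ∈ ℚ[x], the iterated left-to-right CoHA product (f₁(ω_{i,1}) ∈ ℋ_{e_i}) * (f₂(ω_{i,1}) ∈ ℋ_{e_i}) * ⋯ * (f_r(ω_{i,1}) ∈ ℋ_{e_i}) ∈ ℋ_{r·e_i} equals the polynomial obtained from the ℋ(A₁)-product f₁(x₁) * f₂(x₁) * ⋯ * f_r(x₁) ∈ ℋ_r(A₁) by substituting x_b ↦ ω_{i,b} for b = 1,…,r. Consequently the subalgebra 𝒜_{e_i} of ℋ(Q) generated under * by {f(ω_{i,1}) : f ∈ ℚ[x]} ⊆ ℋ_{e_i} is isomorphic as an algebra to ℋ(A₁). -/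
open MvPolynomial
open scoped Classical

/-- A finite quiver with vertex set `Fin n`: a finite type of arrows together with
head and tail maps. -/
structure FinQuiver (n : ℕ) where
  Arr : Type
  [fintypeArr : Fintype Arr]
  hd : Arr → Fin n
  tl : Arr → Fin n

attribute [instance] FinQuiver.fintypeArr

variable {n : ℕ}

/-- `Q` is acyclic: there is no oriented cycle, i.e. no path
`a₁, …, a_{k+1}` (with `hd aₘ = tl aₘ₊₁`) whose final head equals its initial tail. -/
def FinQuiver.Acyclic (Q : FinQuiver n) : Prop :=
  ∀ (k : ℕ) (c : Fin (k + 1) → Q.Arr),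
    (∀ m : Fin k, Q.hd (c m.castSucc) = Q.tl (c m.succ)) →
    Q.hd (c (Fin.last k)) ≠ Q.tl (c 0)

/-- The Euler form `χ_Q` of the quiver `Q`. -/
def FinQuiver.euler (Q : FinQuiver n) (α β : Fin n → ℕ) : ℤ :=
  ∑ i : Fin n, (α i : ℤ) * β i - ∑ a : Q.Arr, (α (Q.tl a) : ℤ) * β (Q.hd a)

/-- The opposite antisymmetrization `⟨α,β⟩ = χ_Q(β,α) − χ_Q(α,β)`. -/
def FinQuiver.lam (Q : FinQuiver n) (α β : Fin n → ℕ) : ℤ :=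
  Q.euler β α - Q.euler α β

/-- The polynomial ring in the variables `ω_{i,j}`, `i ∈ Q₀`, `j ∈ ℕ` (0-indexed). -/
abbrev PolyQ (n : ℕ) := MvPolynomial (Fin n × ℕ) ℚ

/-- The permutation of the variables at vertex `i` induced by a permutation of `ℕ`. -/
def vertexPerm (i : Fin n) (σ : Equiv.Perm ℕ) : Fin n × ℕ → Fin n × ℕ :=
  fun p => if p.1 = i then (i, σ p.2) else p

/-- `f` is, for each vertex `i`, symmetric in the variables `ω_{i,0},…,ω_{i,γ i − 1}`. -/
def SymmIn (γ : Fin n → ℕ) (f : PolyQ n) : Prop :=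
  ∀ (i : Fin n) (σ : Equiv.Perm ℕ),
    (∀ j : ℕ, σ j ≠ j → j < γ i) → rename (vertexPerm i σ) f = f

lemma vars_smul_subset (c : ℚ) (f : PolyQ n) : (c • f).vars ⊆ f.vars := by
  rw [MvPolynomial.smul_eq_C_mul]
  refine (MvPolynomial.vars_mul _ _).trans ?_
  simp [MvPolynomial.vars_C]

/-- `ℋ_γ`: polynomials using only the variables `ω_{i,j}`, `j < γ i`, which are
symmetric at each vertex.  A `ℚ`-submodule of `PolyQ n`. -/
noncomputable def Hspace (γ : Fin n → ℕ) : Submodule ℚ (PolyQ n) where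
  carrier := {f | (∀ p ∈ f.vars, p.2 < γ p.1) ∧ SymmIn γ f}
  add_mem' := by
    rintro f g ⟨hf1, hf2⟩ ⟨hg1, hg2⟩
    refine ⟨fun p hp => ?_, fun i σ hσ => ?_⟩
    · rcases Finset.mem_union.mp (MvPolynomial.vars_add_subset f g hp) with h | h
      exacts [hf1 p h, hg1 p h]
    · rw [map_add, hf2 i σ hσ, hg2 i σ hσ]
  zero_mem' := by
    refine ⟨fun p hp => ?_, fun i σ hσ => map_zero _⟩
    simp [MvPolynomial.vars_0] at hp
  smul_mem' := by
    rintro c f ⟨hf1, hf2⟩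
    refine ⟨fun p hp => hf1 p (vars_smul_subset c f hp), fun i σ hσ => ?_⟩
    rw [map_smul, hf2 i σ hσ]

/-- Polynomials all of whose variables sit at vertex `i`. -/
noncomputable def onlyVertex (i : Fin n) : Submodule ℚ (PolyQ n) where
  carrier := {f | ∀ p ∈ f.vars, p.1 = i}
  add_mem' := by
    intro f g hf hg p hp
    rcases Finset.mem_union.mp (MvPolynomial.vars_add_subset f g hp) with h | h
    exacts [hf p h, hg p h]
  zero_mem' := by
    intro p hp
    simp [MvPolynomial.vars_0] at hp
  smul_mem' := by
    intro c f hf p hp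
    exact hf p (vars_smul_subset c f hp)

/-- `𝒜_{β,m}`: the subspace of `ℋ_{m·β}` of polynomials depending only on the
variables `ω_{i,0},…,ω_{i,m−1}` at the distinguished vertex `i`. -/
noncomputable def Aspace (β : Fin n → ℕ) (i : Fin n) (m : ℕ) : Submodule ℚ (PolyQ n) :=
  Hspace (fun v => m * β v) ⊓ onlyVertex i

/-- Substitute for the `j`-th variable at vertex `i` the variable `ω_{i,s}` where `s`
is the `j`-th element of `T i` in increasing order. -/
noncomputable def substAlong (T : Fin n → Finset ℕ) : PolyQ n →ₐ[ℚ] PolyQ n :=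
  aeval fun p : Fin n × ℕ => X (p.1, ((T p.1).sort (· ≤ ·)).getD p.2 0)

/-- The index set of the Kontsevich–Soibelman localization sum:
for each vertex, a `γ₁ i`-element subset of `{0,…,γ₁ i + γ₂ i − 1}`. -/
def shuffles (γ₁ γ₂ : Fin n → ℕ) : Finset (Fin n → Finset ℕ) :=
  Fintype.piFinset fun i => (Finset.range (γ₁ i + γ₂ i)).powerset.filter fun s => s.card = γ₁ i

def shuffleCompl (γ₁ γ₂ : Fin n → ℕ) (S : Fin n → Finset ℕ) : Fin n → Finset ℕ :=
  fun i => Finset.range (γ₁ i + γ₂ i) \ S i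

/-- The numerator factor attached to the arrow `a`:
`∏_{j' ∈ S̄_{h a}} ∏_{j ∈ S_{t a}} (ω_{h a, j'} − ω_{t a, j})`. -/
noncomputable def arrowFactor (Q : FinQuiver n) (γ₁ γ₂ : Fin n → ℕ)
    (S : Fin n → Finset ℕ) (a : Q.Arr) : PolyQ n :=
  ∏ j' ∈ shuffleCompl γ₁ γ₂ S (Q.hd a), ∏ j ∈ S (Q.tl a),
    (X (Q.hd a, j') - X (Q.tl a, j))

noncomputable def interactionNum (Q : FinQuiver n) (γ₁ γ₂ : Fin n → ℕ)
    (S : Fin n → Finset ℕ) : PolyQ n :=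
  ∏ a : Q.Arr, arrowFactor Q γ₁ γ₂ S a

noncomputable def interactionDen (γ₁ γ₂ : Fin n → ℕ) (S : Fin n → Finset ℕ) : PolyQ n :=
  ∏ i : Fin n, ∏ j' ∈ shuffleCompl γ₁ γ₂ S i, ∏ j ∈ S i, (X (i, j') - X (i, j))

/-- The Kontsevich–Soibelman localization sum, an element of the field of rational
functions (the fraction field of `PolyQ n`). -/
noncomputable def cohaMulRat (Q : FinQuiver n) (γ₁ γ₂ : Fin n → ℕ) (f₁ f₂ : PolyQ n) :
    FractionRing (PolyQ n) :=
  ∑ S ∈ shuffles γ₁ γ₂,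
    algebraMap (PolyQ n) (FractionRing (PolyQ n))
        (substAlong S f₁ * substAlong (shuffleCompl γ₁ γ₂ S) f₂ * interactionNum Q γ₁ γ₂ S) /
      algebraMap (PolyQ n) (FractionRing (PolyQ n)) (interactionDen γ₁ γ₂ S)

/-- The CoHA product `f₁ * f₂`: the unique polynomial representing the localization
sum (and `0` if the sum were not a polynomial, which never happens). -/
noncomputable def cohaMul (Q : FinQuiver n) (γ₁ γ₂ : Fin n → ℕ) (f₁ f₂ : PolyQ n) : PolyQ n :=
  if h : ∃ P : PolyQ n,
      algebraMap (PolyQ n) (FractionRing (PolyQ n)) P = cohaMulRat Q γ₁ γ₂ f₁ f₂ then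
    h.choose
  else 0

/-- Iterated, left-to-right, CoHA product of a list of dimension-vector/polynomial pairs.
Returns the total dimension vector together with the product. -/
noncomputable def cohaProd (Q : FinQuiver n) :
    List ((Fin n → ℕ) × PolyQ n) → (Fin n → ℕ) × PolyQ n
  | [] => (fun _ => 0, 1)
  | x :: xs => xs.foldl (fun acc y => (acc.1 + y.1, cohaMul Q acc.1 y.1 acc.2 y.2)) x

/-- Left-to-right CoHA product `f 0 * f 1 * ⋯ * f (r−1)` with `f u ∈ ℋ_{γ u}`. -/
noncomputable def cohaProdFin (Q : FinQuiver n) {r : ℕ} (γ : Fin r → Fin n → ℕ)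
    (f : Fin r → PolyQ n) : PolyQ n :=
  (cohaProd Q (List.ofFn fun u => (γ u, f u))).2

/-- The quiver with one vertex and no arrows. -/
def A1 : FinQuiver 1 := { Arr := Empty, hd := Empty.elim, tl := Empty.elim }

/-- `ψ_p = x₁ ^ p ∈ ℋ₁(A₁)`. -/
noncomputable def psi (p : ℕ) : PolyQ 1 := X ((0 : Fin 1), 0) ^ p

def oneDim : Fin 1 → ℕ := fun _ => 1

/-- The simple dimension vector `e_i`. -/
def simpleDim (i : Fin n) : Fin n → ℕ := fun v => if v = i then 1 else 0

/-- A subquiver of `Q`. -/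
structure Subquiver (Q : FinQuiver n) where
  verts : Finset (Fin n)
  arrows : Finset Q.Arr
  hd_mem : ∀ a ∈ arrows, Q.hd a ∈ verts
  tl_mem : ∀ a ∈ arrows, Q.tl a ∈ verts

def Subquiver.Full {Q : FinQuiver n} (Q' : Subquiver Q) : Prop :=
  ∀ a : Q.Arr, Q.hd a ∈ Q'.verts → Q.tl a ∈ Q'.verts → a ∈ Q'.arrows

/-- Adjacency in the underlying undirected graph of a subquiver. -/
def Subquiver.Adj {Q : FinQuiver n} (Q' : Subquiver Q) (x y : Fin n) : Prop :=
  ∃ a ∈ Q'.arrows, (Q.hd a = x ∧ Q.tl a = y) ∨ (Q.hd a = y ∧ Q.tl a = x)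

def Subquiver.Connected {Q : FinQuiver n} (Q' : Subquiver Q) : Prop :=
  ∀ x ∈ Q'.verts, ∀ y ∈ Q'.verts, Relation.ReflTransGen Q'.Adj x y

/-- The Euler form of the subquiver `Q'` (on `ℤ`-valued vectors). -/
def Subquiver.eulerZ {Q : FinQuiver n} (Q' : Subquiver Q) (α β : Fin n → ℤ) : ℤ :=
  ∑ i ∈ Q'.verts, α i * β i - ∑ a ∈ Q'.arrows, α (Q.tl a) * β (Q.hd a)

/-- Positive definiteness of the Tits form of `Q'` on vectors supported on `Q'`. -/
def Subquiver.PosDefTits {Q : FinQuiver n} (Q' : Subquiver Q) : Prop :=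
  ∀ β : Fin n → ℤ, (∀ i, i ∉ Q'.verts → β i = 0) → β ≠ 0 → 0 < Q'.eulerZ β β

/-- A connected full subquiver with positive definite Tits form. -/
def Subquiver.IsDynkin {Q : FinQuiver n} (Q' : Subquiver Q) : Prop :=
  Q'.Connected ∧ Q'.Full ∧ Q'.PosDefTits

/-- A positive root of `Q'`: a nonzero dimension vector supported on `Q'` with
Tits form equal to `1`. -/
def Subquiver.IsPosRoot {Q : FinQuiver n} (Q' : Subquiver Q) (β : Fin n → ℕ) : Prop :=
  (∀ i, i ∉ Q'.verts → β i = 0) ∧ β ≠ 0 ∧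
    Q'.eulerZ (fun i => (β i : ℤ)) (fun i => (β i : ℤ)) = 1

/-- A subquiver regarded as a quiver in its own right (on the ambient vertex set). -/
def Subquiver.toQuiver {Q : FinQuiver n} (Q' : Subquiver Q) : FinQuiver n :=
  { Arr := {a : Q.Arr // a ∈ Q'.arrows}, hd := fun a => Q.hd a.1, tl := fun a => Q.tl a.1 }

/-- An (ordered list) subquiver partition `𝒬• = (Q¹,…,Q^ℓ)`: nonempty connected
subquivers whose vertex sets partition `Q₀`. -/
structure SubqPartition (Q : FinQuiver n) (ℓ : ℕ) where
  part : Fin ℓ → Subquiver Q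
  nonempty' : ∀ j, (part j).verts.Nonempty
  connected' : ∀ j, (part j).Connected
  cover : ∀ i : Fin n, ∃! j, i ∈ (part j).verts

/-- The set `𝒬•₁` of arrows belonging to one of the parts. -/
noncomputable def SubqPartition.arrs {Q : FinQuiver n} {ℓ : ℕ} (P : SubqPartition Q ℓ) : Finset Q.Arr :=
  Finset.univ.biUnion fun j => (P.part j).arrows

/-- The partition is admissible and ordered: every arrow not inside a part goes from a
later part to an earlier part (head before tail). -/
def SubqPartition.Ordered {Q : FinQuiver n} {ℓ : ℕ} (P : SubqPartition Q ℓ) : Prop :=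
  ∀ a : Q.Arr, a ∉ P.arrs → ∀ i j : Fin ℓ,
    Q.hd a ∈ (P.part i).verts → Q.tl a ∈ (P.part j).verts → i < j

/-- Every part is a Dynkin subquiver. -/
def SubqPartition.Dynkin {Q : FinQuiver n} {ℓ : ℕ} (P : SubqPartition Q ℓ) : Prop :=
  ∀ j, (P.part j).IsDynkin

/-- `β : Fin r → (Fin n → ℕ)` is a Reineke-ordered enumeration of `Φ₊(𝒬•)`, with
`blk u` the part to which `β u` belongs: block-monotone, enumerating all positive roots
without repetition, and within each block `u < v → ⟨β u, β v⟩ ≥ 0`. -/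
def IsReinekeOrder {Q : FinQuiver n} {ℓ : ℕ} (P : SubqPartition Q ℓ) {r : ℕ}
    (β : Fin r → Fin n → ℕ) (blk : Fin r → Fin ℓ) : Prop :=
  Monotone blk ∧
  (∀ u, (P.part (blk u)).IsPosRoot (β u)) ∧
  Function.Injective β ∧
  (∀ j (b : Fin n → ℕ), (P.part j).IsPosRoot b → ∃ u, β u = b) ∧
  (∀ u v : Fin r, u < v → blk u = blk v → 0 ≤ Q.lam (β u) (β v))

namespace CoHAWork

/-- agreement on vars suffices for aeval -/
lemma aeval_congr_vars {σ : Type*} {S : Type*} [CommSemiring S] [Algebra ℚ S]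
    (f : MvPolynomial σ ℚ) (g₁ g₂ : σ → S) (h : ∀ p ∈ f.vars, g₁ p = g₂ p) :
    aeval g₁ f = aeval g₂ f := by
  rw [f.as_sum, map_sum, map_sum]
  refine Finset.sum_congr rfl fun d hd => ?_
  rw [aeval_monomial, aeval_monomial]
  congr 1
  refine Finsupp.prod_congr fun p hp => ?_
  rw [h p]
  rw [mem_vars]
  exact ⟨d, hd, hp⟩

noncomputable abbrev xv (k : ℕ) : PolyQ 1 := X ((0:Fin 1), k)

lemma xv_inj : Function.Injective xv := by
  intro a b h
  have := MvPolynomial.X_injective (R := ℚ) h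
  simpa using this

lemma xv_sub_ne_zero {a b : ℕ} (h : a ≠ b) : xv a - xv b ≠ 0 := by
  rw [sub_ne_zero]
  exact fun hh => h (xv_inj hh)

def sa (j k : ℕ) : ℕ := if k < j then k else k + 1

lemma sa_inj (j : ℕ) : Function.Injective (sa j) := by
  intro a b
  unfold sa
  split <;> split <;> omega

lemma sa_lt {j m : ℕ} (hj : j < m + 1) {k : ℕ} (hk : k < m) : sa j k < m + 1 := by
  unfold sa; split <;> omega

lemma sa_ne {j k : ℕ} : sa j k ≠ j := by unfold sa; split <;> omega

lemma sa_strictMono (j : ℕ) : StrictMono (sa j) := by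
  intro a b h; unfold sa; split <;> split <;> omega

noncomputable def renSA (j : ℕ) : PolyQ 1 →ₐ[ℚ] PolyQ 1 :=
  rename (fun p => ((0:Fin 1), sa j p.2))

lemma renSA_xv (j k : ℕ) : renSA j (xv k) = xv (sa j k) := by
  simp [renSA, rename_X]

lemma renSA_inj (j : ℕ) : Function.Injective (renSA j) := by
  apply rename_injective
  intro a b h
  have h2 := congrArg Prod.snd h
  exact Prod.ext (Subsingleton.elim _ _) (sa_inj j h2)

/-- the half-off-diagonal pairs -/
def pairsF (r : ℕ) : Finset (ℕ × ℕ) :=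
  (Finset.range r ×ˢ Finset.range r).filter fun q => q.1 < q.2

lemma mem_pairsF {r : ℕ} {q : ℕ × ℕ} : q ∈ pairsF r ↔ q.1 < q.2 ∧ q.2 < r := by
  simp only [pairsF, Finset.mem_filter, Finset.mem_product, Finset.mem_range]
  omega

noncomputable def Vpoly (r : ℕ) : PolyQ 1 := ∏ q ∈ pairsF r, (xv q.2 - xv q.1)

lemma Vpoly_ne_zero (r : ℕ) : Vpoly r ≠ 0 := by
  apply Finset.prod_ne_zero_iff.mpr
  intro q hq
  exact xv_sub_ne_zero (by rw [mem_pairsF] at hq; omega)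

lemma Vpoly_eq_det (r : ℕ) :
    Vpoly r = Matrix.det (Matrix.vandermonde fun k : Fin r => xv k) := by
  rw [Matrix.det_vandermonde, Finset.prod_sigma', Vpoly]
  refine (Finset.prod_bij (fun q _ => ((q.1 : ℕ), (q.2 : ℕ))) ?_ ?_ ?_ ?_).symm
  · rintro ⟨a, b⟩ hab
    simp only [Finset.mem_sigma, Finset.mem_univ, Finset.mem_Ioi, true_and] at hab
    rw [mem_pairsF]
    exact ⟨hab, b.isLt⟩
  · rintro ⟨a, b⟩ _ ⟨a', b'⟩ _ h
    simp only [Prod.mk.injEq] at h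
    have ha : a = a' := Fin.val_injective h.1
    subst ha
    have hb : b = b' := Fin.val_injective h.2
    rw [hb]
  · rintro ⟨a, b⟩ hab
    rw [mem_pairsF] at hab
    refine ⟨⟨⟨a, lt_trans hab.1 hab.2⟩, ⟨b, hab.2⟩⟩, ?_, rfl⟩
    simp only [Finset.mem_sigma, Finset.mem_univ, Finset.mem_Ioi, true_and]
    exact hab.1
  · rintro ⟨a, b⟩ hab
    rfl


noncomputable def Dmat (r : ℕ) (F : Fin r → Polynomial ℚ) : Matrix (Fin r) (Fin r) (PolyQ 1) :=
  Matrix.of fun u k => Polynomial.aeval (xv (k : ℕ)) (F u)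

noncomputable def Dpoly (r : ℕ) (F : Fin r → Polynomial ℚ) : PolyQ 1 := (Dmat r F).det

/-- the truncation algebra map killing variables with index ≥ r -/
noncomputable def kap (r : ℕ) : PolyQ 1 →ₐ[ℚ] PolyQ 1 :=
  aeval fun p => if p.2 < r then X p else 0

lemma kap_xv {r k : ℕ} (h : k < r) : kap r (xv k) = xv k := by
  simp [kap, aeval_X, h]

lemma vars_kap (r : ℕ) (f : PolyQ 1) : ∀ p ∈ (kap r f).vars, p.2 < r := by
  intro p hp
  have : (kap r f).vars ⊆ f.vars.biUnion fun q =>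
      ((fun p : Fin 1 × ℕ => if p.2 < r then (X p : PolyQ 1) else 0) q).vars := by
    have hb : kap r f = bind₁ (fun p : Fin 1 × ℕ => if p.2 < r then (X p : PolyQ 1) else 0) f := rfl
    rw [hb]
    exact vars_bind₁ _ f
  have hp2 := this hp
  simp only [Finset.mem_biUnion] at hp2
  obtain ⟨q, _, hq⟩ := hp2
  by_cases h : q.2 < r
  · rw [if_pos h, vars_X] at hq
    simp only [Finset.mem_singleton] at hq
    subst hq; exact h
  · rw [if_neg h, vars_0] at hq
    exact absurd hq (Finset.notMem_empty p)

lemma kap_Vpoly (r : ℕ) : kap r (Vpoly r) = Vpoly r := by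
  rw [Vpoly, map_prod]
  refine Finset.prod_congr rfl fun q hq => ?_
  rw [mem_pairsF] at hq
  rw [map_sub, kap_xv hq.2, kap_xv (lt_trans hq.1 hq.2)]

lemma kap_Dpoly (r : ℕ) (F : Fin r → Polynomial ℚ) : kap r (Dpoly r F) = Dpoly r F := by
  rw [Dpoly, AlgHom.map_det]
  congr 1
  refine Matrix.ext fun u k => ?_
  rw [AlgHom.mapMatrix_apply, Matrix.map_apply]
  show kap r (Polynomial.aeval (xv (k:ℕ)) (F u)) = Polynomial.aeval (xv (k:ℕ)) (F u)
  rw [← Polynomial.aeval_algHom_apply, kap_xv k.isLt]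

lemma vars_of_mul_V_eq_D {r : ℕ} {g : PolyQ 1} {F : Fin r → Polynomial ℚ}
    (h : g * Vpoly r = Dpoly r F) : ∀ p ∈ g.vars, p.2 < r := by
  have h2 : kap r g * Vpoly r = Dpoly r F := by
    have := congrArg (kap r) h
    rwa [map_mul, kap_Vpoly, kap_Dpoly] at this
  have h3 : g = kap r g := by
    have h4 : (g - kap r g) * Vpoly r = 0 := by rw [sub_mul, h, h2, sub_self]
    exact sub_eq_zero.mp ((mul_eq_zero.mp h4).resolve_right (Vpoly_ne_zero r))
  rw [h3]; exact vars_kap r g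

/-- substitution x_a ↦ x_b -/
noncomputable def Tsub (a b : ℕ) : PolyQ 1 →ₐ[ℚ] PolyQ 1 :=
  aeval fun p => if p.2 = a then xv b else X p

lemma Tsub_xv (a b k : ℕ) : Tsub a b (xv k) = if k = a then xv b else xv k := by
  simp only [Tsub, aeval_X]

lemma dvd_sub_Tsub (a b : ℕ) (f : PolyQ 1) : (xv a - xv b) ∣ f - Tsub a b f := by
  induction f using MvPolynomial.induction_on with
  | C c => simp [Tsub]
  | add p q hp hq =>
    rw [map_add]
    have : p + q - (Tsub a b p + Tsub a b q) = (p - Tsub a b p) + (q - Tsub a b q) := by ring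
    rw [this]; exact dvd_add hp hq
  | mul_X p s hp =>
    rw [map_mul]
    have : p * X s - Tsub a b p * Tsub a b (X s) =
        (p - Tsub a b p) * Tsub a b (X s) + p * (X s - Tsub a b (X s)) := by ring
    rw [this]
    refine dvd_add (Dvd.dvd.mul_right hp _) (Dvd.dvd.mul_left ?_ _)
    show (xv a - xv b) ∣ (X s - Tsub a b (X s))
    by_cases h : s.2 = a
    · have hs : X s = xv a := by
        congr 1
        exact Prod.ext (Subsingleton.elim _ _) h
      rw [show Tsub a b (X s) = xv b by rw [Tsub, aeval_X, if_pos h], hs]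
    · rw [show Tsub a b (X s) = X s by rw [Tsub, aeval_X, if_neg h], sub_self]
      exact dvd_zero _

lemma Tsub_eq_zero_iff_dvd {a b : ℕ} (hab : a ≠ b) (f : PolyQ 1) :
    Tsub a b f = 0 ↔ (xv a - xv b) ∣ f := by
  constructor
  · intro h
    have := dvd_sub_Tsub a b f
    rwa [h, sub_zero] at this
  · rintro ⟨c, rfl⟩
    rw [map_mul, map_sub, Tsub_xv, Tsub_xv, if_pos rfl, if_neg (Ne.symm hab), sub_self, zero_mul]

lemma not_isUnit_xv_sub (a b : ℕ) : ¬ IsUnit (xv a - xv b) := by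
  intro h
  have := h.map (aeval (R := ℚ) (fun _ : Fin 1 × ℕ => (0:ℚ)))
  rw [map_sub, aeval_X, aeval_X, sub_self] at this
  exact absurd this (by simp)

lemma prime_xv_sub {a b : ℕ} (hab : a ≠ b) : Prime (xv a - xv b) := by
  refine ⟨xv_sub_ne_zero hab, not_isUnit_xv_sub a b, fun c d h => ?_⟩
  rw [← Tsub_eq_zero_iff_dvd hab] at h ⊢
  rw [← Tsub_eq_zero_iff_dvd hab]
  rw [map_mul] at h
  exact mul_eq_zero.mp h

lemma prod_primes_dvd' {β : Type*} (s : Finset β) (Fq : β → PolyQ 1)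
    (hp : ∀ q ∈ s, Prime (Fq q))
    (hna : ∀ q ∈ s, ∀ q' ∈ s, q ≠ q' → ¬ (Fq q ∣ Fq q'))
    (m : PolyQ 1) (hd : ∀ q ∈ s, Fq q ∣ m) :
    (∏ q ∈ s, Fq q) ∣ m := by
  induction s using Finset.induction_on generalizing m with
  | empty => simp
  | @insert a s ha ih =>
    obtain ⟨c, rfl⟩ := hd a (Finset.mem_insert_self a s)
    rw [Finset.prod_insert ha]
    refine mul_dvd_mul_left _ (ih (fun q hq => hp q (Finset.mem_insert_of_mem hq))
      (fun q hq q' hq' => hna q (Finset.mem_insert_of_mem hq) q' (Finset.mem_insert_of_mem hq'))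
      c ?_)
    intro q hq
    have hdq := hd q (Finset.mem_insert_of_mem hq)
    rcases (hp q (Finset.mem_insert_of_mem hq)).2.2 _ _ hdq with h | h
    · exact absurd h (hna q (Finset.mem_insert_of_mem hq) a (Finset.mem_insert_self a s)
        (fun he => ha (he ▸ hq)))
    · exact h

lemma Tsub_Dpoly_zero {r : ℕ} (F : Fin r → Polynomial ℚ) {q : ℕ × ℕ} (hq : q ∈ pairsF r) :
    Tsub q.2 q.1 (Dpoly r F) = 0 := by
  rw [mem_pairsF] at hq
  rw [Dpoly, AlgHom.map_det]
  refine Matrix.det_zero_of_column_eq (M := ((Tsub q.2 q.1).mapMatrix (Dmat r F)))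
    (i := (⟨q.1, lt_trans hq.1 hq.2⟩ : Fin r)) (j := ⟨q.2, hq.2⟩) ?_ ?_
  · intro h
    have := congrArg Fin.val h
    simp only at this
    omega
  · intro k
    show Tsub q.2 q.1 (Polynomial.aeval (xv q.1) (F k)) = Tsub q.2 q.1 (Polynomial.aeval (xv q.2) (F k))
    rw [← Polynomial.aeval_algHom_apply, ← Polynomial.aeval_algHom_apply, Tsub_xv, Tsub_xv,
      if_pos rfl, if_neg (by omega)]

lemma not_dvd_xv_sub_pairs {r : ℕ} {q q' : ℕ × ℕ} (hq : q ∈ pairsF r) (hq' : q' ∈ pairsF r)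
    (hne : q ≠ q') : ¬ ((xv q.2 - xv q.1) ∣ (xv q'.2 - xv q'.1)) := by
  rw [mem_pairsF] at hq hq'
  intro h
  have h0 : Tsub q.2 q.1 (xv q'.2 - xv q'.1) = 0 := by
    obtain ⟨c, hc⟩ := h
    rw [hc, map_mul, map_sub, Tsub_xv, Tsub_xv, if_pos rfl, if_neg (by omega), sub_self, zero_mul]
  rw [map_sub, Tsub_xv, Tsub_xv] at h0
  have hne' : q.1 ≠ q'.1 ∨ q.2 ≠ q'.2 := by
    by_contra hcon
    push_neg at hcon
    exact hne (Prod.ext hcon.1 hcon.2)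
  have heq := sub_eq_zero.mp h0
  split_ifs at heq with h1 h2 h2 <;>
    · have hv := xv_inj heq
      rcases hne' with h | h <;> omega

lemma Vpoly_dvd_Dpoly (r : ℕ) (F : Fin r → Polynomial ℚ) : Vpoly r ∣ Dpoly r F := by
  refine prod_primes_dvd' (pairsF r) _ ?_ ?_ (Dpoly r F) ?_
  · intro q hq
    rw [mem_pairsF] at hq
    exact prime_xv_sub (by omega)
  · intro q hq q' hq' hne
    exact not_dvd_xv_sub_pairs hq hq' hne
  · intro q hq
    exact (Tsub_eq_zero_iff_dvd (by rw [mem_pairsF] at hq; omega) _).mp (Tsub_Dpoly_zero F hq)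

lemma sa_eq_iff {j k z : ℕ} : sa j k = z ↔ (z ≠ j ∧ ((z < j ∧ k = z) ∨ (j < z ∧ k = z - 1))) := by
  unfold sa; split <;> omega

lemma sort_erase_range (m j : ℕ) (hj : j < m + 1) :
    ((Finset.range (m+1)).erase j).sort (· ≤ ·) = List.map (sa j) (List.range m) := by
  refine (fun hp hs => List.Perm.eq_of_pairwise' (Finset.pairwise_sort _ _) hs hp) ?_ ?_
  · refine List.perm_of_nodup_nodup_toFinset_eq (Finset.sort_nodup _ _)
      (List.Nodup.map (sa_inj j) List.nodup_range) ?_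
    rw [Finset.sort_toFinset]
    ext z
    simp only [List.mem_toFinset, List.mem_map, List.mem_range, Finset.mem_erase,
      Finset.mem_range]
    constructor
    · rintro ⟨hne, hz⟩
      by_cases hzj : z < j
      · exact ⟨z, by omega, by rw [sa_eq_iff]; omega⟩
      · exact ⟨z - 1, by omega, by rw [sa_eq_iff]; omega⟩
    · rintro ⟨k, hk, hz⟩
      rw [sa_eq_iff] at hz
      omega
  · refine List.Pairwise.map _ (fun a b hab => ((sa_strictMono j) hab).le) ?_
    exact List.pairwise_lt_range

lemma sort_erase_getD {m j k : ℕ} (hj : j < m + 1) (hk : k < m) :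
    (((Finset.range (m+1)).erase j).sort (· ≤ ·)).getD k 0 = sa j k := by
  rw [sort_erase_range m j hj]
  rw [List.getD_eq_getElem _ _ (by simpa using hk)]
  simp

lemma coe_succAbove {m : ℕ} (j : Fin (m+1)) (k : Fin m) :
    ((j.succAbove k : Fin (m+1)) : ℕ) = sa (j : ℕ) (k : ℕ) := by
  unfold sa
  rcases lt_or_ge (Fin.castSucc k) j with h | h
  · rw [Fin.succAbove_of_castSucc_lt _ _ h]
    have : (k : ℕ) < (j : ℕ) := h
    simp [this]
  · rw [Fin.succAbove_of_le_castSucc _ _ h]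
    have : ¬ ((k : ℕ) < (j : ℕ)) := not_lt.mpr h
    simp [this]

lemma erase_range_split {m j : ℕ} (hj : j < m + 1) :
    (Finset.range (m+1)).erase j = Finset.range j ∪ Finset.Ioo j (m+1) := by
  ext z
  simp only [Finset.mem_erase, Finset.mem_range, Finset.mem_union, Finset.mem_Ioo]
  omega

lemma Vfactor {m : ℕ} {j : ℕ} (hj : j < m + 1) :
    Vpoly (m+1) =
      (-1 : PolyQ 1)^(m - j) * (∏ k ∈ (Finset.range (m+1)).erase j, (xv j - xv k)) *
        renSA j (Vpoly m) := by
  have hsplit1 := Finset.prod_filter_mul_prod_filter_not (pairsF (m+1))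
    (fun q => q.2 = j) (fun q => xv q.2 - xv q.1)
  have hsplit2 := Finset.prod_filter_mul_prod_filter_not
    ((pairsF (m+1)).filter (fun q => ¬ q.2 = j))
    (fun q => q.1 = j) (fun q => xv q.2 - xv q.1)
  -- A: pairs (k, j), k < j
  have hA : (pairsF (m+1)).filter (fun q => q.2 = j) =
      (Finset.range j).image (fun k => (k, j)) := by
    ext ⟨a, b⟩
    simp only [Finset.mem_filter, mem_pairsF, Finset.mem_image, Finset.mem_range, Prod.mk.injEq]
    constructor
    · rintro ⟨⟨h1, h2⟩, h3⟩
      exact ⟨a, by omega, rfl, by omega⟩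
    · rintro ⟨k, hk, rfl, rfl⟩
      omega
  have hAprod : ∏ q ∈ (pairsF (m+1)).filter (fun q => q.2 = j), (xv q.2 - xv q.1) =
      ∏ k ∈ Finset.range j, (xv j - xv k) := by
    rw [hA, Finset.prod_image (by intro a _ b _ h; exact (Prod.mk.injEq .. ▸ h).1)]
  -- B: pairs (j, l), l > j
  have hB : ((pairsF (m+1)).filter (fun q => ¬ q.2 = j)).filter (fun q => q.1 = j) =
      (Finset.Ioo j (m+1)).image (fun l => (j, l)) := by
    ext ⟨a, b⟩
    simp only [Finset.mem_filter, mem_pairsF, Finset.mem_image, Finset.mem_Ioo, Prod.mk.injEq]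
    constructor
    · rintro ⟨⟨⟨h1, h2⟩, h3⟩, h4⟩
      exact ⟨b, by omega, by omega, rfl⟩
    · rintro ⟨l, hl, rfl, rfl⟩
      omega
  have hBprod : ∏ q ∈ ((pairsF (m+1)).filter (fun q => ¬ q.2 = j)).filter (fun q => q.1 = j),
      (xv q.2 - xv q.1) = (-1 : PolyQ 1)^(m - j) * ∏ l ∈ Finset.Ioo j (m+1), (xv j - xv l) := by
    rw [hB, Finset.prod_image (by intro a _ b _ h; exact (Prod.mk.injEq .. ▸ h).2)]
    have : ∀ l ∈ Finset.Ioo j (m+1), xv l - xv j = (-1 : PolyQ 1) * (xv j - xv l) := by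
      intro l _; ring
    rw [Finset.prod_congr rfl this, Finset.prod_mul_distrib, Finset.prod_const, Nat.card_Ioo]
    have he : m + 1 - j - 1 = m - j := by omega
    rw [he]
  -- C: pairs with both entries ≠ j
  have hC : ((pairsF (m+1)).filter (fun q => ¬ q.2 = j)).filter (fun q => ¬ q.1 = j) =
      (pairsF m).image (fun q => (sa j q.1, sa j q.2)) := by
    ext ⟨a, b⟩
    simp only [Finset.mem_filter, mem_pairsF, Finset.mem_image, Prod.mk.injEq]
    constructor
    · rintro ⟨⟨⟨h1, h2⟩, h3⟩, h4⟩
      refine ⟨⟨(if a < j then a else a - 1), (if b < j then b else b - 1)⟩, ⟨?_, ?_⟩, ?_, ?_⟩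
      · dsimp only; split_ifs <;> omega
      · dsimp only; split_ifs <;> omega
      · dsimp only; rw [sa_eq_iff]; split_ifs <;> omega
      · dsimp only; rw [sa_eq_iff]; split_ifs <;> omega
    · rintro ⟨⟨c, d⟩, hcd, rfl, rfl⟩
      have h1 : sa j c < sa j d := sa_strictMono j hcd.1
      have h2 : sa j d < m + 1 := by unfold sa; split <;> omega
      have h3 : sa j d ≠ j := by unfold sa; split <;> omega
      have h4 : sa j c ≠ j := by unfold sa; split <;> omega
      exact ⟨⟨⟨h1, h2⟩, h3⟩, h4⟩
  have hCprod : ∏ q ∈ ((pairsF (m+1)).filter (fun q => ¬ q.2 = j)).filter (fun q => ¬ q.1 = j),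
      (xv q.2 - xv q.1) = renSA j (Vpoly m) := by
    rw [hC, Finset.prod_image, Vpoly, map_prod]
    · refine Finset.prod_congr rfl fun q hq => ?_
      rw [map_sub, renSA_xv, renSA_xv]
    · intro a _ b _ h
      obtain ⟨h1, h2⟩ := Prod.mk.injEq .. ▸ h
      exact Prod.ext (sa_inj j h1) (sa_inj j h2)
  have key : Vpoly (m+1) =
      (∏ k ∈ Finset.range j, (xv j - xv k)) *
      (((-1 : PolyQ 1)^(m - j) * ∏ l ∈ Finset.Ioo j (m+1), (xv j - xv l)) *
        renSA j (Vpoly m)) := by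
    rw [Vpoly, ← hsplit1, ← hAprod]
    congr 1
    rw [← hsplit2, ← hBprod, ← hCprod]
  rw [key, erase_range_split hj, Finset.prod_union (by
    rw [Finset.disjoint_left]; intro z hz1 hz2
    simp only [Finset.mem_range] at hz1
    simp only [Finset.mem_Ioo] at hz2
    omega)]
  ring

lemma mem_pairsF_of {r : ℕ} {a b : ℕ} (h1 : a < b) (h2 : b < r) : (a, b) ∈ pairsF r :=
  mem_pairsF.mpr ⟨h1, h2⟩


end CoHAWork


namespace CoHAWork

noncomputable def evAt (j : ℕ) : PolyQ 1 →ₐ[ℚ] PolyQ 1 := aeval (fun _ => xv j)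

lemma evAt_xv (j k : ℕ) : evAt j (xv k) = xv j := by simp [evAt]

instance : IsEmpty A1.Arr := ⟨fun a => Empty.elim a⟩

lemma interactionNum_A1 (γ₁ γ₂ : Fin 1 → ℕ) (S : Fin 1 → Finset ℕ) :
    interactionNum A1 γ₁ γ₂ S = 1 := by
  rw [interactionNum, Finset.univ_eq_empty, Finset.prod_empty]

lemma algMap_ne_zero {n : ℕ} {x : PolyQ n} (hx : x ≠ 0) :
    algebraMap (PolyQ n) (FractionRing (PolyQ n)) x ≠ 0 := fun h =>
  hx (IsFractionRing.injective (PolyQ n) (FractionRing (PolyQ n)) (h.trans (map_zero _).symm))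

lemma cohaMul_eq_of_rat {n : ℕ} {Q : FinQuiver n} {γ₁ γ₂ : Fin n → ℕ} {f₁ f₂ P : PolyQ n}
    (h : algebraMap (PolyQ n) (FractionRing (PolyQ n)) P = cohaMulRat Q γ₁ γ₂ f₁ f₂) :
    cohaMul Q γ₁ γ₂ f₁ f₂ = P := by
  have hex : ∃ P', algebraMap (PolyQ n) (FractionRing (PolyQ n)) P' = cohaMulRat Q γ₁ γ₂ f₁ f₂ :=
    ⟨P, h⟩
  rw [cohaMul, dif_pos hex]
  exact IsFractionRing.injective (PolyQ n) (FractionRing (PolyQ n)) (hex.choose_spec.trans h.symm)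

def shufOf (m : ℕ) (j : Fin (m+1)) : Fin 1 → Finset ℕ :=
  fun _ => (Finset.range (m+1)).erase (j : ℕ)

lemma shufOf_mem (m : ℕ) (j : Fin (m+1)) :
    shufOf m j ∈ shuffles (fun _ => m) (fun _ => 1) := by
  refine Fintype.mem_piFinset.mpr fun v => ?_
  rw [Finset.mem_filter, Finset.mem_powerset]
  refine ⟨Finset.erase_subset _ _, ?_⟩
  show ((Finset.range (m+1)).erase (j:ℕ)).card = m
  rw [Finset.card_erase_of_mem (Finset.mem_range.mpr j.isLt), Finset.card_range]
  omega

lemma shufOf_compl (m : ℕ) (j : Fin (m+1)) :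
    shuffleCompl (fun _ => m) (fun _ => 1) (shufOf m j) = fun _ => {(j : ℕ)} := by
  funext v
  show Finset.range (m + 1) \ (Finset.range (m+1)).erase (j:ℕ) = {(j:ℕ)}
  rw [Finset.erase_eq,
    Finset.sdiff_sdiff_eq_self (Finset.singleton_subset_iff.mpr (Finset.mem_range.mpr j.isLt))]

lemma rename_eq_aeval_X {σ τ : Type*} (f : σ → τ) (g : MvPolynomial σ ℚ) :
    rename f g = aeval (fun p => (X (f p) : MvPolynomial τ ℚ)) g := by
  rw [← aeval_X_left_apply (rename f g), aeval_rename, Function.comp_def]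

lemma substAlong_shufOf {m : ℕ} (j : Fin (m+1)) {g : PolyQ 1}
    (hg : ∀ p ∈ g.vars, p.2 < m) :
    substAlong (shufOf m j) g = renSA (j : ℕ) g := by
  rw [substAlong, renSA, rename_eq_aeval_X]
  show aeval _ g = _
  refine aeval_congr_vars g _ _ fun p hp => ?_
  have h1 : ((shufOf m j p.1).sort (· ≤ ·)).getD p.2 0 = sa (j : ℕ) p.2 :=
    sort_erase_getD j.isLt (hg p hp)
  rw [h1]
  exact congrArg X (Prod.ext (Subsingleton.elim _ _) rfl)

lemma substAlong_singleton {jn : ℕ} {h : PolyQ 1} (hh : ∀ p ∈ h.vars, p = ((0 : Fin 1), 0))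
    (T : Fin 1 → Finset ℕ) (hT : T = fun _ => ({jn} : Finset ℕ)) :
    substAlong T h = evAt jn h := by
  subst hT
  rw [substAlong, evAt]
  refine aeval_congr_vars h _ _ fun p hp => ?_
  rw [hh p hp]
  simp only [Finset.sort_singleton, List.getD_cons_zero]

lemma interactionDen_A1 (m : ℕ) (j : Fin (m+1)) :
    interactionDen (fun _ => m) (fun _ => 1) (shufOf m j) =
      ∏ k ∈ (Finset.range (m+1)).erase (j : ℕ), (xv (j : ℕ) - xv k) := by
  rw [interactionDen, Fin.prod_univ_one,
    congrFun (shufOf_compl m j) 0, Finset.prod_singleton]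
  rfl

lemma cohaMulRat_A1 {m : ℕ} (g h : PolyQ 1) (hg : ∀ p ∈ g.vars, p.2 < m)
    (hh : ∀ p ∈ h.vars, p = ((0 : Fin 1), 0)) :
    cohaMulRat A1 (fun _ => m) (fun _ => 1) g h =
      ∑ j : Fin (m+1),
        algebraMap (PolyQ 1) (FractionRing (PolyQ 1)) (renSA (j : ℕ) g * evAt (j : ℕ) h) /
          algebraMap (PolyQ 1) (FractionRing (PolyQ 1))
            (∏ k ∈ (Finset.range (m+1)).erase (j : ℕ), (xv (j : ℕ) - xv k)) := by
  rw [cohaMulRat]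
  refine (Finset.sum_bij (fun j _ => shufOf m j) (fun j _ => shufOf_mem m j) ?_ ?_ ?_).symm
  · intro j₁ _ j₂ _ hcon
    by_contra hne
    have h0 : shufOf m j₁ 0 = shufOf m j₂ 0 := congrFun hcon 0
    have hmem : (j₂ : ℕ) ∈ (Finset.range (m+1)).erase (j₁ : ℕ) :=
      Finset.mem_erase.mpr ⟨fun hv => hne (Fin.val_injective hv).symm,
        Finset.mem_range.mpr j₂.isLt⟩
    have hmem2 : (j₂ : ℕ) ∈ (Finset.range (m+1)).erase (j₂ : ℕ) := by
      show (j₂ : ℕ) ∈ shufOf m j₂ 0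
      rw [← h0]
      exact hmem
    exact (Finset.mem_erase.mp hmem2).1 rfl
  · intro S hS
    have hS0 := Fintype.mem_piFinset.mp hS 0
    rw [Finset.mem_filter, Finset.mem_powerset] at hS0
    have hsub : S 0 ⊆ Finset.range (m+1) := hS0.1
    have hcardS : (S 0).card = m := hS0.2
    have hcard : ((Finset.range (m+1)) \ S 0).card = 1 := by
      rw [Finset.card_sdiff_of_subset hsub, Finset.card_range, hcardS]
      omega
    obtain ⟨c, hc⟩ := Finset.card_eq_one.mp hcard
    have hcm : c < m + 1 := by
      have : c ∈ Finset.range (m+1) \ S 0 := hc ▸ Finset.mem_singleton_self c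
      exact Finset.mem_range.mp (Finset.mem_sdiff.mp this).1
    refine ⟨⟨c, hcm⟩, Finset.mem_univ _, ?_⟩
    funext v
    have hv : v = 0 := Subsingleton.elim _ _
    subst hv
    show (Finset.range (m+1)).erase c = S 0
    rw [Finset.erase_eq, ← hc, Finset.sdiff_sdiff_eq_self hsub]
  · intro j _
    rw [substAlong_shufOf j hg,
      substAlong_singleton hh _ (shufOf_compl m j),
      interactionNum_A1, mul_one, interactionDen_A1]

lemma neg_one_pow_sub {j r : ℕ} (hj : j ≤ r) :
    ((-1 : PolyQ 1)) ^ (r - j) = (-1 : PolyQ 1) ^ (r + j) := by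
  have he : r + j = (r - j) + 2 * j := by omega
  rw [he, pow_add, pow_mul, neg_one_sq, one_pow, mul_one]

lemma vars_polyaeval (q : Polynomial ℚ) (k : ℕ) :
    ∀ p ∈ (Polynomial.aeval (xv k) q).vars, p = ((0 : Fin 1), k) := by
  intro p hp
  induction q using Polynomial.induction_on' generalizing p with
  | add f g hf hg =>
    rw [map_add] at hp
    rcases Finset.mem_union.mp (vars_add_subset _ _ hp) with h | h
    exacts [hf p h, hg p h]
  | monomial m a =>
    rw [Polynomial.aeval_monomial] at hp
    have h1 := vars_mul _ _ hp
    rcases Finset.mem_union.mp h1 with h | h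
    · rw [show algebraMap ℚ (PolyQ 1) a = C a from rfl, vars_C] at h
      exact absurd h (Finset.notMem_empty p)
    · have h2 := vars_pow _ _ h
      rw [vars_X] at h2
      exact Finset.mem_singleton.mp h2

lemma renSA_ne_zero {j : ℕ} {g : PolyQ 1} (hg : g ≠ 0) : renSA j g ≠ 0 := fun h =>
  hg (renSA_inj j (h.trans (map_zero _).symm))

lemma cohaMul_A1_step (r : ℕ) (F : Fin (r+1) → Polynomial ℚ) (g : PolyQ 1)
    (hgV : g * Vpoly r = Dpoly r (fun u => F u.castSucc)) :
    cohaMul A1 (fun _ => r) oneDim g (Polynomial.aeval (xv 0) (F (Fin.last r))) * Vpoly (r+1) =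
      Dpoly (r+1) F := by
  classical
  set hpol : PolyQ 1 := Polynomial.aeval (xv 0) (F (Fin.last r)) with hhpol
  have hg : ∀ p ∈ g.vars, p.2 < r := vars_of_mul_V_eq_D hgV
  have hh : ∀ p ∈ hpol.vars, p = ((0 : Fin 1), 0) := vars_polyaeval (F (Fin.last r)) 0
  obtain ⟨Qq, hQq⟩ := Vpoly_dvd_Dpoly (r+1) F
  have hlast : ∀ j : Fin (r+1),
      evAt (j : ℕ) hpol = Polynomial.aeval (xv (j : ℕ)) (F (Fin.last r)) := by
    intro j
    rw [hhpol, ← Polynomial.aeval_algHom_apply, evAt_xv]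
  have hminor : ∀ j : Fin (r+1),
      renSA (j : ℕ) (Dpoly r (fun u => F u.castSucc)) =
        ((Dmat (r+1) F).submatrix (Fin.last r).succAbove j.succAbove).det := by
    intro j
    rw [Dpoly, AlgHom.map_det]
    congr 1
    refine Matrix.ext fun u k => ?_
    rw [AlgHom.mapMatrix_apply, Matrix.map_apply, Matrix.submatrix_apply]
    simp only [Dmat, Matrix.of_apply]
    rw [← Polynomial.aeval_algHom_apply, renSA_xv, coe_succAbove, Fin.succAbove_last]
  have hrat : algebraMap (PolyQ 1) (FractionRing (PolyQ 1)) Qq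
      = cohaMulRat A1 (fun _ => r) oneDim g hpol := by
    have e0 : cohaMulRat A1 (fun _ => r) oneDim g hpol
        = cohaMulRat A1 (fun _ => r) (fun _ => 1) g hpol := rfl
    rw [e0, cohaMulRat_A1 g hpol hg hh]
    have hterm : ∀ j : Fin (r+1),
        algebraMap (PolyQ 1) (FractionRing (PolyQ 1)) (renSA (j:ℕ) g * evAt (j:ℕ) hpol) /
          algebraMap (PolyQ 1) (FractionRing (PolyQ 1))
            (∏ k ∈ (Finset.range (r+1)).erase (j:ℕ), (xv (j:ℕ) - xv k)) =
        algebraMap (PolyQ 1) (FractionRing (PolyQ 1))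
          ((-1 : PolyQ 1)^(r + (j:ℕ)) *
            (evAt (j:ℕ) hpol * renSA (j:ℕ) (Dpoly r (fun u => F u.castSucc)))) /
          algebraMap (PolyQ 1) (FractionRing (PolyQ 1)) (Vpoly (r+1)) := by
      intro j
      set c : PolyQ 1 := (-1 : PolyQ 1)^(r - (j:ℕ)) * renSA (j:ℕ) (Vpoly r) with hcdef
      have hc : c ≠ 0 := mul_ne_zero (pow_ne_zero _ (neg_ne_zero.mpr one_ne_zero))
        (renSA_ne_zero (Vpoly_ne_zero r))
      have hdc : (∏ k ∈ (Finset.range (r+1)).erase (j:ℕ), (xv (j:ℕ) - xv k)) * c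
          = Vpoly (r+1) := by
        rw [hcdef, Vfactor (show (j:ℕ) < r + 1 from j.isLt)]
        ring
      rw [← mul_div_mul_right _ _ (algMap_ne_zero hc), ← map_mul, ← map_mul, hdc]
      congr 2
      have hexp : ((-1 : PolyQ 1)) ^ (r - (j:ℕ)) = (-1 : PolyQ 1) ^ (r + (j:ℕ)) :=
        neg_one_pow_sub (Fin.is_le j)
      calc renSA (j:ℕ) g * evAt (j:ℕ) hpol * c
          = (-1 : PolyQ 1)^(r - (j:ℕ)) *
              (evAt (j:ℕ) hpol * (renSA (j:ℕ) g * renSA (j:ℕ) (Vpoly r))) := by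
            rw [hcdef]; ring
        _ = (-1 : PolyQ 1)^(r + (j:ℕ)) *
              (evAt (j:ℕ) hpol * renSA (j:ℕ) (Dpoly r (fun u => F u.castSucc))) := by
            rw [hexp, ← map_mul, hgV]
    rw [show (∑ j : Fin (r+1),
        algebraMap (PolyQ 1) (FractionRing (PolyQ 1)) (renSA (j:ℕ) g * evAt (j:ℕ) hpol) /
          algebraMap (PolyQ 1) (FractionRing (PolyQ 1))
            (∏ k ∈ (Finset.range (r+1)).erase (j:ℕ), (xv (j:ℕ) - xv k))) =
      ∑ j : Fin (r+1), algebraMap (PolyQ 1) (FractionRing (PolyQ 1))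
          ((-1 : PolyQ 1)^(r + (j:ℕ)) *
            (evAt (j:ℕ) hpol * renSA (j:ℕ) (Dpoly r (fun u => F u.castSucc)))) /
          algebraMap (PolyQ 1) (FractionRing (PolyQ 1)) (Vpoly (r+1))
      from Finset.sum_congr rfl fun j _ => hterm j]
    rw [← Finset.sum_div, ← map_sum]
    have hsum : (∑ j : Fin (r+1), (-1 : PolyQ 1)^(r + (j:ℕ)) *
        (evAt (j:ℕ) hpol * renSA (j:ℕ) (Dpoly r (fun u => F u.castSucc)))) = Dpoly (r+1) F := by
      rw [show Dpoly (r+1) F = (Dmat (r+1) F).det from rfl,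
        Matrix.det_succ_row (Dmat (r+1) F) (Fin.last r)]
      refine Finset.sum_congr rfl fun j _ => ?_
      rw [hlast j, hminor j, Fin.val_last]
      have hA : Dmat (r+1) F (Fin.last r) j = Polynomial.aeval (xv ((j:ℕ))) (F (Fin.last r)) := rfl
      rw [hA]
      ring
    rw [hsum, hQq, map_mul, mul_comm, mul_div_assoc,
      div_self (algMap_ne_zero (Vpoly_ne_zero (r+1))), mul_one]
  rw [cohaMul_eq_of_rat hrat, hQq]
  ring

lemma pairsF_zero : pairsF 0 = ∅ :=
  Finset.eq_empty_of_forall_notMem fun q hq => by rw [mem_pairsF] at hq; omega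

lemma pairsF_one : pairsF 1 = ∅ :=
  Finset.eq_empty_of_forall_notMem fun q hq => by rw [mem_pairsF] at hq; omega

lemma cohaProd_concat {n : ℕ} (Q : FinQuiver n) (x : (Fin n → ℕ) × PolyQ n)
    (xs : List ((Fin n → ℕ) × PolyQ n)) (y : (Fin n → ℕ) × PolyQ n) :
    cohaProd Q ((x :: xs).concat y) =
      ((cohaProd Q (x :: xs)).1 + y.1,
        cohaMul Q (cohaProd Q (x :: xs)).1 y.1 (cohaProd Q (x :: xs)).2 y.2) := by
  have e1 : ∀ (z : (Fin n → ℕ) × PolyQ n) (zs : List ((Fin n → ℕ) × PolyQ n)),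
      cohaProd Q (z :: zs) =
        zs.foldl (fun acc y => (acc.1 + y.1, cohaMul Q acc.1 y.1 acc.2 y.2)) z :=
    fun z zs => rfl
  rw [show ((x :: xs).concat y) = x :: (xs ++ [y]) by
    rw [List.concat_eq_append, List.cons_append]]
  rw [e1, List.foldl_concat, e1]

lemma A1_chain (r : ℕ) (F : Fin r → Polynomial ℚ) :
    (cohaProd A1 (List.ofFn fun u => (oneDim, Polynomial.aeval (xv 0) (F u)))).1 = (fun _ => r) ∧
    (cohaProd A1 (List.ofFn fun u => (oneDim, Polynomial.aeval (xv 0) (F u)))).2 * Vpoly r =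
      Dpoly r F := by
  induction r with
  | zero =>
    rw [List.ofFn_zero]
    constructor
    · rfl
    · show (1 : PolyQ 1) * Vpoly 0 = Dpoly 0 F
      rw [one_mul, Dpoly, Matrix.det_fin_zero, Vpoly, pairsF_zero, Finset.prod_empty]
  | succ r ih =>
    rcases Nat.eq_zero_or_pos r with hr | hr
    · subst hr
      rw [show (List.ofFn fun u : Fin 1 => (oneDim, Polynomial.aeval (xv 0) (F u))) =
          [(oneDim, Polynomial.aeval (xv 0) (F 0))] from by
        rw [List.ofFn_succ, List.ofFn_zero]]
      constructor
      · rfl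
      · show Polynomial.aeval (xv 0) (F 0) * Vpoly 1 = Dpoly 1 F
        rw [Vpoly, pairsF_one, Finset.prod_empty, mul_one, Dpoly, Matrix.det_fin_one]
        rfl
    · obtain ⟨x, xs, hxxs⟩ : ∃ x xs,
          (List.ofFn fun u : Fin r => (oneDim, Polynomial.aeval (xv 0) (F u.castSucc))) =
            x :: xs := by
        cases hL : (List.ofFn fun u : Fin r =>
            (oneDim, Polynomial.aeval (xv 0) (F u.castSucc))) with
        | nil => exact absurd (List.ofFn_eq_nil_iff.mp hL) (by omega)
        | cons a as => exact ⟨a, as, rfl⟩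
      have hconcat : (List.ofFn fun u : Fin (r+1) => (oneDim, Polynomial.aeval (xv 0) (F u))) =
          ((List.ofFn fun u : Fin r => (oneDim, Polynomial.aeval (xv 0) (F u.castSucc))).concat
            (oneDim, Polynomial.aeval (xv 0) (F (Fin.last r)))) :=
        List.ofFn_succ' _
      obtain ⟨ih1, ih2⟩ := ih (fun u => F u.castSucc)
      rw [hconcat, hxxs, cohaProd_concat, ← hxxs]
      constructor
      · rw [ih1]
        funext v
        simp [oneDim]
      · rw [ih1]
        exact cohaMul_A1_step r F _ ih2

lemma A1_prodFin (r : ℕ) (F : Fin r → Polynomial ℚ) :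
    cohaProdFin A1 (fun _ => oneDim)
        (fun u => Polynomial.aeval (X ((0:Fin 1), 0) : PolyQ 1) (F u)) * Vpoly r =
      Dpoly r F :=
  (A1_chain r F).2

end CoHAWork

namespace CoHAWork

variable {n : ℕ}

def iot (i : Fin n) : Fin 1 × ℕ → Fin n × ℕ := fun p => (i, p.2)

lemma iot_inj (i : Fin n) : Function.Injective (iot i) := by
  intro a b h
  have h2 := congrArg Prod.snd h
  exact Prod.ext (Subsingleton.elim _ _) h2

lemma renI_inj (i : Fin n) : Function.Injective (rename (iot i) : PolyQ 1 → PolyQ n) :=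
  rename_injective _ (iot_inj i)

noncomputable def phiQ (i : Fin n) : FractionRing (PolyQ 1) →+* FractionRing (PolyQ n) :=
  IsFractionRing.lift (g := ((algebraMap (PolyQ n) (FractionRing (PolyQ n))).comp
      (rename (iot i) : PolyQ 1 →ₐ[ℚ] PolyQ n).toRingHom))
    ((IsFractionRing.injective (PolyQ n) (FractionRing (PolyQ n))).comp (renI_inj i))

lemma phiQ_alg (i : Fin n) (x : PolyQ 1) :
    phiQ i (algebraMap (PolyQ 1) (FractionRing (PolyQ 1)) x)
      = algebraMap (PolyQ n) (FractionRing (PolyQ n)) (rename (iot i) x) :=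
  IsFractionRing.lift_algebraMap _ _

noncomputable def rhoQ (i : Fin n) : PolyQ n →ₐ[ℚ] PolyQ 1 :=
  aeval (fun p => if p.1 = i then xv p.2 else 0)

lemma rhoQ_renI (i : Fin n) (f : PolyQ 1) : rhoQ i (rename (iot i) f) = f := by
  have : (rhoQ i).comp (rename (iot i) : PolyQ 1 →ₐ[ℚ] PolyQ n) = AlgHom.id ℚ (PolyQ 1) := by
    refine algHom_ext fun p => ?_
    rw [AlgHom.comp_apply, rename_X, AlgHom.id_apply]
    show rhoQ i (X (i, p.2)) = X p
    rw [rhoQ, aeval_X, if_pos rfl]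
    exact congrArg X (Prod.ext (Subsingleton.elim _ _) rfl)
  calc rhoQ i (rename (iot i) f) = ((rhoQ i).comp (rename (iot i) : PolyQ 1 →ₐ[ℚ] PolyQ n)) f :=
        rfl
    _ = f := by rw [this, AlgHom.id_apply]

def eS (i : Fin n) (T : Fin 1 → Finset ℕ) : Fin n → Finset ℕ :=
  fun v => if v = i then T 0 else ∅

lemma no_loop {Q : FinQuiver n} (hQ : Q.Acyclic) (a : Q.Arr) : Q.hd a ≠ Q.tl a := by
  have := hQ 0 (fun _ => a) (fun m => m.elim0)
  exact this

section transfer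

variable {Q : FinQuiver n} (hQ : Q.Acyclic) (i : Fin n) {γ₁ γ₂ : Fin n → ℕ}
  (h1 : ∀ v, v ≠ i → γ₁ v = 0) (h2 : ∀ v, v ≠ i → γ₂ v = 0)

include h1 h2

lemma eS_mem {T : Fin 1 → Finset ℕ}
    (hT : T ∈ shuffles (fun _ => γ₁ i) (fun _ => γ₂ i)) : eS i T ∈ shuffles γ₁ γ₂ := by
  refine Fintype.mem_piFinset.mpr fun v => ?_
  rw [Finset.mem_filter, Finset.mem_powerset]
  by_cases hv : v = i
  · subst hv
    have h0 := Fintype.mem_piFinset.mp hT 0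
    rw [Finset.mem_filter, Finset.mem_powerset] at h0
    have ha : T 0 ⊆ Finset.range (γ₁ v + γ₂ v) := h0.1
    have hb : (T 0).card = γ₁ v := h0.2
    rw [show eS v T v = T 0 from if_pos rfl]
    exact ⟨ha, hb⟩
  · rw [show eS i T v = ∅ from if_neg hv]
    exact ⟨Finset.empty_subset _, by rw [Finset.card_empty, h1 v hv]⟩

lemma eS_compl {T : Fin 1 → Finset ℕ} :
    shuffleCompl γ₁ γ₂ (eS i T) = eS i (shuffleCompl (fun _ => γ₁ i) (fun _ => γ₂ i) T) := by
  funext v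
  by_cases hv : v = i
  · subst hv
    show Finset.range (γ₁ v + γ₂ v) \ eS v T v = _
    rw [show eS v T v = T 0 from if_pos rfl,
      show eS v (shuffleCompl (fun _ => γ₁ v) (fun _ => γ₂ v) T) v
        = Finset.range (γ₁ v + γ₂ v) \ T 0 from if_pos rfl]
  · show Finset.range (γ₁ v + γ₂ v) \ eS i T v = _
    rw [show eS i T v = ∅ from if_neg hv, h1 v hv, h2 v hv,
      show eS i (shuffleCompl (fun _ => γ₁ i) (fun _ => γ₂ i) T) v = ∅ from if_neg hv]
    rfl

lemma substAlong_eS (T : Fin 1 → Finset ℕ) (g : PolyQ 1) :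
    substAlong (eS i T) (rename (iot i) g) = rename (iot i) (substAlong T g) := by
  have : (substAlong (eS i T)).comp (rename (iot i) : PolyQ 1 →ₐ[ℚ] PolyQ n)
      = ((rename (iot i) : PolyQ 1 →ₐ[ℚ] PolyQ n)).comp (substAlong T) := by
    refine algHom_ext fun p => ?_
    rw [AlgHom.comp_apply, AlgHom.comp_apply, rename_X]
    show substAlong (eS i T) (X (i, p.2)) = rename (iot i) (substAlong T (X p))
    rw [substAlong, substAlong, aeval_X, aeval_X, rename_X]
    show X (i, ((eS i T i).sort (· ≤ ·)).getD p.2 0) = X (iot i (p.1, ((T p.1).sort (· ≤ ·)).getD p.2 0))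
    rw [show eS i T i = T 0 from if_pos rfl, Subsingleton.elim p.1 0]
    rfl
  calc substAlong (eS i T) (rename (iot i) g)
      = ((substAlong (eS i T)).comp (rename (iot i) : PolyQ 1 →ₐ[ℚ] PolyQ n)) g := rfl
    _ = rename (iot i) (substAlong T g) := by rw [this]; rfl

lemma interactionNum_eS (hQac : Q.Acyclic) (T : Fin 1 → Finset ℕ) :
    interactionNum Q γ₁ γ₂ (eS i T) = 1 := by
  rw [interactionNum]
  refine Finset.prod_eq_one fun a _ => ?_
  rw [arrowFactor]
  by_cases ht : Q.tl a = i
  · have hh : Q.hd a ≠ i := fun hhd => no_loop hQac a (hhd.trans ht.symm)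
    have hcompl : shuffleCompl γ₁ γ₂ (eS i T) (Q.hd a) = ∅ := by
      show Finset.range (γ₁ (Q.hd a) + γ₂ (Q.hd a)) \ eS i T (Q.hd a) = ∅
      rw [h1 _ hh, h2 _ hh]
      simp
    rw [hcompl, Finset.prod_empty]
  · have hS : eS i T (Q.tl a) = ∅ := if_neg ht
    rw [hS]
    refine Finset.prod_eq_one fun j' _ => Finset.prod_empty

lemma interactionDen_eS (T : Fin 1 → Finset ℕ) :
    interactionDen γ₁ γ₂ (eS i T) =
      rename (iot i) (interactionDen (fun _ => γ₁ i) (fun _ => γ₂ i) T) := by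
  rw [interactionDen, interactionDen, Fin.prod_univ_one, map_prod]
  rw [Finset.prod_eq_single_of_mem i (Finset.mem_univ i) ?side]
  case side =>
    intro v _ hv
    have hcompl : shuffleCompl γ₁ γ₂ (eS i T) v = ∅ := by
      show Finset.range (γ₁ v + γ₂ v) \ eS i T v = ∅
      rw [h1 _ hv, h2 _ hv]
      simp
    rw [hcompl, Finset.prod_empty]
  have hcompl : shuffleCompl γ₁ γ₂ (eS i T) i
      = shuffleCompl (fun _ => γ₁ i) (fun _ => γ₂ i) T 0 := by
    rw [eS_compl i h1 h2, show eS i (shuffleCompl (fun _ => γ₁ i) (fun _ => γ₂ i) T) i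
      = shuffleCompl (fun _ => γ₁ i) (fun _ => γ₂ i) T 0 from if_pos rfl]
  rw [hcompl]
  refine Finset.prod_congr rfl fun j' _ => ?_
  rw [map_prod]
  rw [show eS i T i = T 0 from if_pos rfl]
  refine Finset.prod_congr rfl fun j _ => ?_
  rw [map_sub, rename_X, rename_X]
  rfl

lemma cohaMulRat_transfer (hQac : Q.Acyclic) (g₁ g₂ : PolyQ 1) :
    cohaMulRat Q γ₁ γ₂ (rename (iot i) g₁) (rename (iot i) g₂)
      = phiQ i (cohaMulRat A1 (fun _ => γ₁ i) (fun _ => γ₂ i) g₁ g₂) := by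
  rw [cohaMulRat, cohaMulRat, map_sum]
  refine (Finset.sum_nbij (fun T => eS i T) (fun T hT => eS_mem i h1 h2 hT) ?_ ?_ ?_).symm
  · intro T₁ _ T₂ _ hcon
    have hcon' : eS i T₁ = eS i T₂ := hcon
    funext v
    rw [Subsingleton.elim v 0]
    have h5 := congrFun hcon' i
    rwa [show eS i T₁ i = T₁ 0 from if_pos rfl, show eS i T₂ i = T₂ 0 from if_pos rfl] at h5
  · rintro S hS
    rw [Finset.mem_coe] at hS
    refine ⟨fun _ => S i, ?_, ?_⟩
    · rw [Finset.mem_coe]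
      refine Fintype.mem_piFinset.mpr fun v => ?_
      exact Fintype.mem_piFinset.mp hS i
    · show eS i (fun _ => S i) = S
      funext v
      by_cases hv : v = i
      · subst hv
        exact if_pos rfl
      · rw [show eS i (fun _ => S i) v = ∅ from if_neg hv]
        have h0 := Fintype.mem_piFinset.mp hS v
        rw [Finset.mem_filter] at h0
        have hc := h0.2
        rw [h1 v hv] at hc
        exact (Finset.card_eq_zero.mp hc).symm
  · intro T hT
    beta_reduce
    rw [map_div₀, phiQ_alg, phiQ_alg]
    rw [interactionNum_A1, mul_one, interactionNum_eS i h1 h2 hQac, mul_one,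
      eS_compl i h1 h2, substAlong_eS i h1 h2, substAlong_eS i h1 h2,
      interactionDen_eS i h1 h2, ← map_mul]

lemma cohaMul_transfer (hQac : Q.Acyclic) (g₁ g₂ : PolyQ 1) :
    cohaMul Q γ₁ γ₂ (rename (iot i) g₁) (rename (iot i) g₂)
      = rename (iot i) (cohaMul A1 (fun _ => γ₁ i) (fun _ => γ₂ i) g₁ g₂) := by
  by_cases hex : ∃ P : PolyQ 1, algebraMap (PolyQ 1) (FractionRing (PolyQ 1)) P
      = cohaMulRat A1 (fun _ => γ₁ i) (fun _ => γ₂ i) g₁ g₂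
  · obtain ⟨P, hP⟩ := hex
    have hA : cohaMul A1 (fun _ => γ₁ i) (fun _ => γ₂ i) g₁ g₂ = P := cohaMul_eq_of_rat hP
    have hQside : algebraMap (PolyQ n) (FractionRing (PolyQ n)) (rename (iot i) P)
        = cohaMulRat Q γ₁ γ₂ (rename (iot i) g₁) (rename (iot i) g₂) := by
      rw [cohaMulRat_transfer i h1 h2 hQac, ← hP, phiQ_alg]
    rw [hA, cohaMul_eq_of_rat hQside]
  · have hexQ : ¬ ∃ P : PolyQ n, algebraMap (PolyQ n) (FractionRing (PolyQ n)) P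
        = cohaMulRat Q γ₁ γ₂ (rename (iot i) g₁) (rename (iot i) g₂) := by
      rintro ⟨P, hP⟩
      apply hex
      obtain ⟨a, b, hb, hab⟩ := IsFractionRing.div_surjective
        (A := PolyQ 1) (cohaMulRat A1 (fun _ => γ₁ i) (fun _ => γ₂ i) g₁ g₂)
      have hb0 : b ≠ 0 := nonZeroDivisors.ne_zero hb
      have hP2 : algebraMap (PolyQ n) (FractionRing (PolyQ n)) P
          = algebraMap (PolyQ n) (FractionRing (PolyQ n)) (rename (iot i) a) /
            algebraMap (PolyQ n) (FractionRing (PolyQ n)) (rename (iot i) b) := by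
        rw [hP, cohaMulRat_transfer i h1 h2 hQac, ← hab, map_div₀, phiQ_alg, phiQ_alg]
      have hbQ0 : algebraMap (PolyQ n) (FractionRing (PolyQ n)) (rename (iot i) b) ≠ 0 :=
        algMap_ne_zero fun hz => hb0 (renI_inj i (hz.trans (map_zero _).symm))
      have hP3 : P * rename (iot i) b = rename (iot i) a := by
        apply IsFractionRing.injective (PolyQ n) (FractionRing (PolyQ n))
        rw [map_mul, hP2, div_mul_cancel₀ _ hbQ0]
      have hP4 : rhoQ i P * b = a := by
        have := congrArg (rhoQ i) hP3
        rwa [map_mul, rhoQ_renI, rhoQ_renI] at this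
      refine ⟨rhoQ i P, ?_⟩
      rw [← hab, ← hP4, map_mul, mul_div_assoc,
        div_self (algMap_ne_zero hb0), mul_one]
    rw [cohaMul, dif_neg hexQ, cohaMul, dif_neg hex, map_zero]

end transfer

lemma foldl_transfer {Q : FinQuiver n} (hQac : Q.Acyclic) (i : Fin n) :
    ∀ (L : List (PolyQ 1)) (a : (Fin n → ℕ) × PolyQ n) (b : (Fin 1 → ℕ) × PolyQ 1),
      (∀ v, v ≠ i → a.1 v = 0) → a.1 i = b.1 0 → a.2 = rename (iot i) b.2 →
      (∀ v, v ≠ i →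
        ((L.map fun q => (simpleDim i, rename (iot i) q)).foldl
          (fun acc y => (acc.1 + y.1, cohaMul Q acc.1 y.1 acc.2 y.2)) a).1 v = 0) ∧
      ((L.map fun q => (simpleDim i, rename (iot i) q)).foldl
          (fun acc y => (acc.1 + y.1, cohaMul Q acc.1 y.1 acc.2 y.2)) a).1 i =
        ((L.map fun q => (oneDim, q)).foldl
          (fun acc y => (acc.1 + y.1, cohaMul A1 acc.1 y.1 acc.2 y.2)) b).1 0 ∧
      ((L.map fun q => (simpleDim i, rename (iot i) q)).foldl
          (fun acc y => (acc.1 + y.1, cohaMul Q acc.1 y.1 acc.2 y.2)) a).2 =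
        rename (iot i)
          (((L.map fun q => (oneDim, q)).foldl
            (fun acc y => (acc.1 + y.1, cohaMul A1 acc.1 y.1 acc.2 y.2)) b).2) := by
  intro L
  induction L with
  | nil => exact fun a b hsupp hval hpoly => ⟨hsupp, hval, hpoly⟩
  | cons q L ih =>
    intro a b hsupp hval hpoly
    simp only [List.map_cons, List.foldl_cons]
    refine ih (a.1 + simpleDim i, cohaMul Q a.1 (simpleDim i) a.2 (rename (iot i) q))
      (b.1 + oneDim, cohaMul A1 b.1 oneDim b.2 q) ?_ ?_ ?_
    · intro v hv
      show a.1 v + simpleDim i v = 0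
      rw [hsupp v hv, show simpleDim i v = 0 from if_neg hv]
    · show a.1 i + simpleDim i i = b.1 0 + oneDim 0
      rw [hval, show simpleDim i i = 1 from if_pos rfl]
      rfl
    · show cohaMul Q a.1 (simpleDim i) a.2 (rename (iot i) q)
        = rename (iot i) (cohaMul A1 b.1 oneDim b.2 q)
      have hb1 : b.1 = fun _ => a.1 i := funext fun v => by
        rw [Subsingleton.elim v 0, hval]
      have hone : oneDim = fun _ : Fin 1 => simpleDim i i := funext fun _ => by
        rw [show simpleDim i i = 1 from if_pos rfl]
        rfl
      rw [hpoly, hb1, hone,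
        cohaMul_transfer i hsupp (fun v hv => show simpleDim i v = 0 from if_neg hv) hQac]

lemma prod_transfer {Q : FinQuiver n} (hQac : Q.Acyclic) (i : Fin n) (L : List (PolyQ 1)) :
    (cohaProd Q (L.map fun q => (simpleDim i, rename (iot i) q))).2
      = rename (iot i) (cohaProd A1 (L.map fun q => (oneDim, q))).2 := by
  cases L with
  | nil =>
    show (1 : PolyQ n) = rename (iot i) 1
    rw [map_one]
  | cons q L =>
    simp only [List.map_cons]
    show ((L.map fun q => (simpleDim i, rename (iot i) q)).foldl
        (fun acc y => (acc.1 + y.1, cohaMul Q acc.1 y.1 acc.2 y.2))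
        (simpleDim i, rename (iot i) q)).2 = rename (iot i) _
    exact (foldl_transfer hQac i L (simpleDim i, rename (iot i) q) (oneDim, q)
      (fun v hv => if_neg hv) (by simp [simpleDim, oneDim]) rfl).2.2

end CoHAWork


namespace CoHAWork

lemma vars_Vpoly (r : ℕ) : ∀ p ∈ (Vpoly r).vars, p.2 < r := by
  intro p hp
  have h1 := vars_prod (s := pairsF r) (fun q => xv q.2 - xv q.1) hp
  rw [Finset.mem_biUnion] at h1
  obtain ⟨q, hq, hpq⟩ := h1
  rw [mem_pairsF] at hq
  have h2 : p ∈ (xv q.2).vars ∪ (xv q.1).vars := vars_sub_subset _ hpq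
  rcases Finset.mem_union.mp h2 with h | h <;>
    · rw [vars_X] at h
      have h3 := Finset.mem_singleton.mp h
      subst h3
      omega

lemma vertexPerm_rename_xv (σ : Equiv.Perm ℕ) (k : ℕ) :
    rename (vertexPerm (0 : Fin 1) σ) (xv k) = xv (σ k) := by
  rw [rename_X]
  show X (if (0 : Fin 1) = 0 then ((0 : Fin 1), σ k) else ((0 : Fin 1), k)) = _
  rw [if_pos rfl]

lemma renV {r : ℕ} (σ : Equiv.Perm ℕ) (π : Equiv.Perm (Fin r))
    (hππ : ∀ k : Fin r, σ (k : ℕ) = ((π k : Fin r) : ℕ)) :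
    rename (vertexPerm (0 : Fin 1) σ) (Vpoly r)
      = ((Equiv.Perm.sign π : ℤ) : PolyQ 1) * Vpoly r := by
  rw [Vpoly_eq_det, AlgHom.map_det]
  have hM : (rename (vertexPerm (0 : Fin 1) σ)).mapMatrix
        (Matrix.vandermonde fun k : Fin r => xv (k : ℕ))
      = (Matrix.vandermonde fun k : Fin r => xv (k : ℕ)).submatrix π id := by
    refine Matrix.ext fun u j => ?_
    rw [AlgHom.mapMatrix_apply, Matrix.map_apply, Matrix.submatrix_apply, id]
    show rename (vertexPerm (0 : Fin 1) σ) ((xv (u : ℕ)) ^ (j : ℕ)) = (xv ((π u : Fin r) : ℕ)) ^ (j : ℕ)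
    rw [map_pow, vertexPerm_rename_xv, hππ]
  rw [hM, Matrix.det_permute, ← Vpoly_eq_det]

lemma renD {r : ℕ} (σ : Equiv.Perm ℕ) (π : Equiv.Perm (Fin r))
    (hππ : ∀ k : Fin r, σ (k : ℕ) = ((π k : Fin r) : ℕ)) (F : Fin r → Polynomial ℚ) :
    rename (vertexPerm (0 : Fin 1) σ) (Dpoly r F)
      = ((Equiv.Perm.sign π : ℤ) : PolyQ 1) * Dpoly r F := by
  rw [Dpoly, AlgHom.map_det]
  have hM : (rename (vertexPerm (0 : Fin 1) σ)).mapMatrix (Dmat r F)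
      = (Dmat r F).submatrix id π := by
    refine Matrix.ext fun u k => ?_
    rw [AlgHom.mapMatrix_apply, Matrix.map_apply, Matrix.submatrix_apply, id]
    show rename (vertexPerm (0 : Fin 1) σ) (Polynomial.aeval (xv (k : ℕ)) (F u))
      = Polynomial.aeval (xv ((π k : Fin r) : ℕ)) (F u)
    rw [← Polynomial.aeval_algHom_apply, vertexPerm_rename_xv, hππ]
  rw [hM, Matrix.det_permute', ← Dpoly]

lemma perm_restrict {r : ℕ} (σ : Equiv.Perm ℕ) (hσ : ∀ j, σ j ≠ j → j < r) :
    ∃ π : Equiv.Perm (Fin r), ∀ k : Fin r, σ (k : ℕ) = ((π k : Fin r) : ℕ) := by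
  have hlt : ∀ k, k < r → σ k < r := by
    intro k hk
    by_contra hge
    have h1 : σ (σ k) = σ k := by
      by_contra hm
      exact hge (hσ _ hm)
    have h2 := σ.injective h1
    rw [h2] at hge
    exact hge hk
  have hlt' : ∀ k, k < r → σ⁻¹ k < r := by
    intro k hk
    by_cases hm : σ⁻¹ k = k
    · rw [hm]; exact hk
    · refine hσ _ ?_
      rw [show σ (σ⁻¹ k) = k from σ.apply_symm_apply k]
      exact fun hh => hm hh.symm
  refine ⟨⟨fun k => ⟨σ k, hlt k k.isLt⟩, fun k => ⟨σ⁻¹ k, hlt' k k.isLt⟩, ?_, ?_⟩,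
    fun k => rfl⟩
  · intro k
    ext
    exact σ.symm_apply_apply k
  · intro k
    ext
    exact σ.apply_symm_apply k

lemma sign_cast_ne_zero {r : ℕ} (π : Equiv.Perm (Fin r)) :
    ((Equiv.Perm.sign π : ℤ) : PolyQ 1) ≠ 0 := by
  rcases Int.units_eq_one_or (Equiv.Perm.sign π) with h | h <;> rw [h] <;> simp

lemma sign_cast_sq {r : ℕ} (π : Equiv.Perm (Fin r)) :
    ((Equiv.Perm.sign π : ℤ) : PolyQ 1) * ((Equiv.Perm.sign π : ℤ) : PolyQ 1) = 1 := by
  rcases Int.units_eq_one_or (Equiv.Perm.sign π) with h | h <;> rw [h] <;> norm_num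

lemma mem_Hspace_of_mul_V {r : ℕ} {P : PolyQ 1} {F : Fin r → Polynomial ℚ}
    (h : P * Vpoly r = Dpoly r F) : P ∈ Hspace (fun _ : Fin 1 => r) := by
  refine ⟨fun p hp => vars_of_mul_V_eq_D h p hp, ?_⟩
  intro i σ hσ
  have hi : i = 0 := Subsingleton.elim _ _
  subst hi
  obtain ⟨π, hππ⟩ := perm_restrict σ (hσ ·)
  have h2 := congrArg (rename (vertexPerm (0 : Fin 1) σ)) h
  rw [map_mul, renV σ π hππ, renD σ π hππ] at h2
  have h3 : rename (vertexPerm (0 : Fin 1) σ) P * Vpoly r = Dpoly r F := by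
    refine mul_left_cancel₀ (sign_cast_ne_zero π) ?_
    rw [← h2]
    ring
  rw [← h] at h3
  exact mul_right_cancel₀ (Vpoly_ne_zero r) h3

/-- the set of iterated CoHA products in `ℋ(A₁)` -/
def genA (r : ℕ) : Set (PolyQ 1) :=
  {g | ∃ F : Fin r → Polynomial ℚ, g = cohaProdFin A1 (fun _ => oneDim)
    (fun u => Polynomial.aeval (X ((0:Fin 1), 0) : PolyQ 1) (F u))}

lemma genA_subset_Hspace (r : ℕ) : genA r ⊆ (Hspace (fun _ : Fin 1 => r) : Set (PolyQ 1)) := by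
  rintro g ⟨F, rfl⟩
  exact mem_Hspace_of_mul_V (A1_prodFin r F)

lemma Hspace_le_span (r : ℕ) :
    Hspace (fun _ : Fin 1 => r) ≤ Submodule.span ℚ (genA r) := by
  intro f hf
  obtain ⟨hvars, hsym⟩ := hf
  set A : PolyQ 1 := f * Vpoly r with hAdef
  have hAvars : ∀ p ∈ A.vars, p.2 < r := by
    intro p hp
    rcases Finset.mem_union.mp (vars_mul _ _ hp) with h | h
    · exact hvars p h
    · exact vars_Vpoly r p h
  -- antisymmetry of A
  have hanti : ∀ π : Equiv.Perm (Fin r),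
      rename (vertexPerm (0 : Fin 1) (π.extendDomain (Fin.equivSubtype))) A
        = ((Equiv.Perm.sign π : ℤ) : PolyQ 1) * A := by
    intro π
    set σπ := π.extendDomain (Fin.equivSubtype (n := r)) with hσdef
    have hmov : ∀ j, σπ j ≠ j → j < r := by
      intro j hj
      by_contra hge
      exact hj (Equiv.Perm.extendDomain_apply_not_subtype π Fin.equivSubtype hge)
    have hππ : ∀ k : Fin r, σπ (k : ℕ) = ((π k : Fin r) : ℕ) := by
      intro k
      rw [hσdef, Equiv.Perm.extendDomain_apply_subtype π Fin.equivSubtype k.isLt]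
      simp [Fin.equivSubtype]
    rw [hAdef, map_mul, hsym 0 σπ hmov, renV σπ π hππ]
    ring
  -- the monomial expansion
  have key : ∀ d ∈ A.support,
      (∑ π : Equiv.Perm (Fin r), ((Equiv.Perm.sign π : ℤ) : PolyQ 1) *
        rename (vertexPerm (0 : Fin 1) (π.extendDomain (Fin.equivSubtype)))
          (monomial d (coeff d A)))
        = coeff d A • Dpoly r (fun u => Polynomial.X ^ d ((0 : Fin 1), (u : ℕ))) := by
    intro d hd
    have hsupp : ∀ p ∈ d.support, p.2 < r := by
      intro p hp
      exact hAvars p ((mem_vars p).mpr ⟨d, hd, hp⟩)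
    have hmono : (monomial d (coeff d A) : PolyQ 1)
        = C (coeff d A) * ∏ u : Fin r, xv (u : ℕ) ^ d ((0 : Fin 1), (u : ℕ)) := by
      rw [monomial_eq]
      congr 1
      show ∏ p ∈ d.support, X p ^ d p = _
      have him : d.support ⊆ Finset.univ.image
          (fun u : Fin r => ((0 : Fin 1), (u : ℕ))) := by
        intro p hp
        refine Finset.mem_image.mpr ⟨⟨p.2, hsupp p hp⟩, Finset.mem_univ _, ?_⟩
        show ((0 : Fin 1), p.2) = p
        exact Prod.ext (Subsingleton.elim _ _) rfl
      rw [Finset.prod_subset him ?van]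
      case van =>
        intro p _ hnp
        rw [Finsupp.notMem_support_iff.mp hnp, pow_zero]
      rw [Finset.prod_image ?inj]
      case inj =>
        intro a _ b _ hab
        have := congrArg Prod.snd hab
        exact Fin.val_injective this
    have hren : ∀ π : Equiv.Perm (Fin r),
        rename (vertexPerm (0 : Fin 1) (π.extendDomain (Fin.equivSubtype)))
            (monomial d (coeff d A))
          = C (coeff d A) * ∏ u : Fin r, xv ((π u : Fin r) : ℕ) ^ d ((0 : Fin 1), (u : ℕ)) := by
      intro π
      set σπ := π.extendDomain (Fin.equivSubtype (n := r)) with hσdef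
      have hππ : ∀ k : Fin r, σπ (k : ℕ) = ((π k : Fin r) : ℕ) := by
        intro k
        rw [hσdef, Equiv.Perm.extendDomain_apply_subtype π Fin.equivSubtype k.isLt]
        simp [Fin.equivSubtype]
      rw [hmono, map_mul, rename_C, map_prod]
      congr 1
      refine Finset.prod_congr rfl fun u _ => ?_
      rw [map_pow, vertexPerm_rename_xv, hππ]
    have hdet : Dpoly r (fun u => Polynomial.X ^ d ((0 : Fin 1), (u : ℕ)))
        = ∑ π : Equiv.Perm (Fin r), ((Equiv.Perm.sign π : ℤ) : PolyQ 1) *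
            ∏ u : Fin r, xv ((π u : Fin r) : ℕ) ^ d ((0 : Fin 1), (u : ℕ)) := by
      rw [Dpoly, ← Matrix.det_transpose, Matrix.det_apply']
      refine Finset.sum_congr rfl fun π _ => ?_
      congr 1
      refine Finset.prod_congr rfl fun u _ => ?_
      rw [Matrix.transpose_apply]
      simp only [Dmat, Matrix.of_apply]
      rw [Polynomial.aeval_X_pow]
    calc (∑ π : Equiv.Perm (Fin r), ((Equiv.Perm.sign π : ℤ) : PolyQ 1) *
        rename (vertexPerm (0 : Fin 1) (π.extendDomain (Fin.equivSubtype)))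
          (monomial d (coeff d A)))
        = ∑ π : Equiv.Perm (Fin r), C (coeff d A) *
            (((Equiv.Perm.sign π : ℤ) : PolyQ 1) *
              ∏ u : Fin r, xv ((π u : Fin r) : ℕ) ^ d ((0 : Fin 1), (u : ℕ))) := by
          refine Finset.sum_congr rfl fun π _ => ?_
          rw [hren π]
          ring
      _ = C (coeff d A) * ∑ π : Equiv.Perm (Fin r),
            ((Equiv.Perm.sign π : ℤ) : PolyQ 1) *
              ∏ u : Fin r, xv ((π u : Fin r) : ℕ) ^ d ((0 : Fin 1), (u : ℕ)) := by
          rw [Finset.mul_sum]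
      _ = coeff d A • Dpoly r (fun u => Polynomial.X ^ d ((0 : Fin 1), (u : ℕ))) := by
          rw [← hdet, smul_eq_C_mul]
  -- averaging
  have havg : ((r.factorial : ℚ)) • A
      = ∑ d ∈ A.support, coeff d A •
          Dpoly r (fun u => Polynomial.X ^ d ((0 : Fin 1), (u : ℕ))) := by
    have h1 : ((r.factorial : ℚ)) • A = ∑ _π : Equiv.Perm (Fin r), A := by
      rw [Finset.sum_const, Finset.card_univ, Fintype.card_perm, Fintype.card_fin]
      rw [Nat.cast_smul_eq_nsmul]
    have h2 : ∀ π : Equiv.Perm (Fin r),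
        A = ((Equiv.Perm.sign π : ℤ) : PolyQ 1) *
          rename (vertexPerm (0 : Fin 1) (π.extendDomain (Fin.equivSubtype))) A := by
      intro π
      rw [hanti π, ← mul_assoc, sign_cast_sq, one_mul]
    rw [h1, Finset.sum_congr rfl fun π _ => h2 π]
    have h3 : ∀ π : Equiv.Perm (Fin r),
        ((Equiv.Perm.sign π : ℤ) : PolyQ 1) *
          rename (vertexPerm (0 : Fin 1) (π.extendDomain (Fin.equivSubtype))) A
        = ∑ d ∈ A.support, ((Equiv.Perm.sign π : ℤ) : PolyQ 1) *
            rename (vertexPerm (0 : Fin 1) (π.extendDomain (Fin.equivSubtype)))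
              (monomial d (coeff d A)) := by
      intro π
      conv_lhs => rw [A.as_sum]
      rw [map_sum, Finset.mul_sum]
    rw [Finset.sum_congr rfl fun π _ => h3 π, Finset.sum_comm]
    exact Finset.sum_congr rfl key
  -- conclude
  have hfact : ((r.factorial : ℚ)) ≠ 0 := Nat.cast_ne_zero.mpr (Nat.factorial_ne_zero r)
  have hdiv : (((r.factorial : ℚ)) • f) * Vpoly r
      = (∑ d ∈ A.support, coeff d A •
          cohaProdFin A1 (fun _ => oneDim)
            (fun u : Fin r => Polynomial.aeval (X ((0:Fin 1), 0) : PolyQ 1)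
              ((Polynomial.X : Polynomial ℚ) ^ d ((0 : Fin 1), (u : ℕ))))) * Vpoly r := by
    rw [smul_mul_assoc, ← hAdef, havg, Finset.sum_mul]
    refine Finset.sum_congr rfl fun d _ => ?_
    rw [smul_mul_assoc, A1_prodFin]
  have hf2 : ((r.factorial : ℚ)) • f
      = ∑ d ∈ A.support, coeff d A •
          cohaProdFin A1 (fun _ => oneDim)
            (fun u : Fin r => Polynomial.aeval (X ((0:Fin 1), 0) : PolyQ 1)
              ((Polynomial.X : Polynomial ℚ) ^ d ((0 : Fin 1), (u : ℕ)))) :=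
    mul_right_cancel₀ (Vpoly_ne_zero r) hdiv
  have hf3 : f = ((r.factorial : ℚ))⁻¹ • ∑ d ∈ A.support, coeff d A •
      cohaProdFin A1 (fun _ => oneDim)
        (fun u : Fin r => Polynomial.aeval (X ((0:Fin 1), 0) : PolyQ 1)
          ((Polynomial.X : Polynomial ℚ) ^ d ((0 : Fin 1), (u : ℕ)))) := by
    rw [← hf2, inv_smul_smul₀ hfact]
  rw [hf3]
  refine Submodule.smul_mem _ _ (Submodule.sum_mem _ fun d _ => Submodule.smul_mem _ _ ?_)
  exact Submodule.subset_span ⟨_, rfl⟩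

lemma Hspace_eq_span (r : ℕ) :
    Hspace (fun _ : Fin 1 => r) = Submodule.span ℚ (genA r) :=
  le_antisymm (Hspace_le_span r)
    ((Submodule.span_le).mpr (genA_subset_Hspace r))

end CoHAWork


/-- For a vertex `i` of the acyclic quiver `Q`, iterated CoHA products
of elements `f(ω_{i,1}) ∈ ℋ_{e_i}` are computed in `ℋ(A₁)`: the `r`-fold product equals
the `ℋ(A₁)`-product `f₁(x₁) * ⋯ * f_r(x₁)` with `x_b ↦ ω_{i,b}`.  Consequently the
subalgebra `𝒜_{e_i}` generated under `*` by `{f(ω_{i,1})}` is isomorphic as an algebra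
to `ℋ(A₁)`: the substitution `x_b ↦ ω_{i,b}` is injective, intertwines the two CoHA
products on the graded pieces, and carries `ℋ_r(A₁)` onto the span of the `r`-fold
products of generators. -/
theorem coha_simple_vertex_eq_A1 {n : ℕ} (Q : FinQuiver n) (hQ : Q.Acyclic) (i : Fin n) :
    (∀ (r : ℕ) (f : Fin r → Polynomial ℚ),
      cohaProdFin Q (fun _ => simpleDim i)
          (fun u => Polynomial.aeval (X (i, 0) : PolyQ n) (f u)) =
        rename (fun p : Fin 1 × ℕ => (i, p.2))
          (cohaProdFin A1 (fun _ => oneDim)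
            (fun u => Polynomial.aeval (X ((0 : Fin 1), 0) : PolyQ 1) (f u)))) ∧
    Function.Injective (rename (fun p : Fin 1 × ℕ => (i, p.2)) : PolyQ 1 → PolyQ n) ∧
    (∀ (r s : ℕ) (g₁ g₂ : PolyQ 1), g₁ ∈ Hspace (fun _ => r) → g₂ ∈ Hspace (fun _ => s) →
      rename (fun p : Fin 1 × ℕ => (i, p.2)) (cohaMul A1 (fun _ => r) (fun _ => s) g₁ g₂) =
        cohaMul Q (fun v => r * simpleDim i v) (fun v => s * simpleDim i v)
          (rename (fun p : Fin 1 × ℕ => (i, p.2)) g₁)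
          (rename (fun p : Fin 1 × ℕ => (i, p.2)) g₂)) ∧
    (∀ r : ℕ,
      Submodule.map
          (rename (fun p : Fin 1 × ℕ => (i, p.2)) : PolyQ 1 →ₐ[ℚ] PolyQ n).toLinearMap
          (Hspace (fun _ => r)) =
        Submodule.span ℚ {g : PolyQ n | ∃ f : Fin r → Polynomial ℚ,
          g = cohaProdFin Q (fun _ => simpleDim i)
            (fun u => Polynomial.aeval (X (i, 0) : PolyQ n) (f u))}) := by
  classical
  have part1 : ∀ (r : ℕ) (f : Fin r → Polynomial ℚ),
      cohaProdFin Q (fun _ => simpleDim i)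
          (fun u => Polynomial.aeval (X (i, 0) : PolyQ n) (f u)) =
        rename (fun p : Fin 1 × ℕ => (i, p.2))
          (cohaProdFin A1 (fun _ => oneDim)
            (fun u => Polynomial.aeval (X ((0 : Fin 1), 0) : PolyQ 1) (f u))) := by
    intro r f
    have hbase : ∀ u : Fin r, Polynomial.aeval (X (i, 0) : PolyQ n) (f u)
        = rename (CoHAWork.iot i) (Polynomial.aeval (X ((0:Fin 1), 0) : PolyQ 1) (f u)) := by
      intro u
      rw [← Polynomial.aeval_algHom_apply, rename_X]
      rfl
    have hQlist : (List.ofFn fun u : Fin r =>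
          (simpleDim i, Polynomial.aeval (X (i, 0) : PolyQ n) (f u)))
        = (List.ofFn fun u : Fin r =>
            Polynomial.aeval (X ((0:Fin 1), 0) : PolyQ 1) (f u)).map
            (fun q => (simpleDim i, rename (CoHAWork.iot i) q)) := by
      rw [List.map_ofFn]
      congr 1
      funext u
      show _ = (simpleDim i,
        rename (CoHAWork.iot i) (Polynomial.aeval (X ((0:Fin 1), 0) : PolyQ 1) (f u)))
      rw [← hbase u]
    have hAlist : (List.ofFn fun u : Fin r =>
          (oneDim, Polynomial.aeval (X ((0:Fin 1), 0) : PolyQ 1) (f u)))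
        = (List.ofFn fun u : Fin r =>
            Polynomial.aeval (X ((0:Fin 1), 0) : PolyQ 1) (f u)).map
            (fun q => (oneDim, q)) := by
      rw [List.map_ofFn]
      rfl
    show (cohaProd Q (List.ofFn fun u : Fin r =>
        (simpleDim i, Polynomial.aeval (X (i, 0) : PolyQ n) (f u)))).2 = _
    rw [hQlist]
    show _ = rename (fun p : Fin 1 × ℕ => (i, p.2))
      ((cohaProd A1 (List.ofFn fun u : Fin r =>
        (oneDim, Polynomial.aeval (X ((0:Fin 1), 0) : PolyQ 1) (f u)))).2)
    rw [hAlist]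
    exact CoHAWork.prod_transfer hQ i _
  refine ⟨part1, CoHAWork.renI_inj i, ?_, ?_⟩
  · intro r s g₁ g₂ _ _
    have h := CoHAWork.cohaMul_transfer (Q := Q) i
      (γ₁ := fun v => r * simpleDim i v) (γ₂ := fun v => s * simpleDim i v)
      (fun v hv => by simp [simpleDim, hv]) (fun v hv => by simp [simpleDim, hv]) hQ g₁ g₂
    have e1 : (fun _ : Fin 1 => r * simpleDim i i) = (fun _ : Fin 1 => r) := by
      funext _
      simp [simpleDim]
    have e2 : (fun _ : Fin 1 => s * simpleDim i i) = (fun _ : Fin 1 => s) := by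
      funext _
      simp [simpleDim]
    rw [e1, e2] at h
    exact h.symm
  · intro r
    have hset : {g : PolyQ n | ∃ f : Fin r → Polynomial ℚ,
        g = cohaProdFin Q (fun _ => simpleDim i)
          (fun u => Polynomial.aeval (X (i, 0) : PolyQ n) (f u))}
        = (rename (CoHAWork.iot i) : PolyQ 1 →ₐ[ℚ] PolyQ n) '' (CoHAWork.genA r) := by
      ext g
      constructor
      · rintro ⟨f, rfl⟩
        exact ⟨_, ⟨f, rfl⟩, (part1 r f).symm⟩
      · rintro ⟨gA, ⟨f, rfl⟩, rfl⟩
        exact ⟨f, (part1 r f).symm⟩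
    rw [hset, CoHAWork.Hspace_eq_span r]
    have himg : ((rename (CoHAWork.iot i) : PolyQ 1 →ₐ[ℚ] PolyQ n) '' CoHAWork.genA r)
        = (⇑((rename (CoHAWork.iot i) : PolyQ 1 →ₐ[ℚ] PolyQ n).toLinearMap) ''
            CoHAWork.genA r) := rfl
    rw [himg]
    exact (Submodule.span_image _).symm
end

section
/- Let Q be a finite acyclic quiver whose vertex set Q₀ = {1,…,n} is ordered head-before-tail, i.e. h(a) < t(a) for every arrow a. Let γ be a dimension vector, let e_i denote the simple dimension vector with 1 at vertex i and 0 elsewhere, and for each i ∈ {1,…,n} let f_i ∈ ℋ_{γ(i)·e_i}, i.e. f_i is a symmetric polynomial in ω_{i,1},…,ω_{i,γ(i)}. Then the left-to-right CoHA product satisfies f₁ * f₂ * ⋯ * f_n = ∏_{i=1}^n f_i(ω_{i,1},…,ω_{i,γ(i)}) in ℋ_γ. -/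
open MvPolynomial
open scoped Classical

variable {n : ℕ}

section AuxCoha

variable {n : ℕ}

lemma sort_range_getD {m j : ℕ} (h : j < m) :
    ((Finset.range m).sort (· ≤ ·)).getD j 0 = j := by
  rw [Finset.sort_range, List.getD_eq_getElem _ _ (by simpa using h)]
  simp

lemma substAlong_id (T : Fin n → Finset ℕ) (f : PolyQ n)
    (h : ∀ p ∈ f.vars, ((T p.1).sort (· ≤ ·)).getD p.2 0 = p.2) :
    substAlong T f = f := by
  show aeval (fun p : Fin n × ℕ =>
      X (p.1, ((T p.1).sort (· ≤ ·)).getD p.2 0)) f = f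
  conv_rhs => rw [← MvPolynomial.aeval_X_left_apply (R := ℚ) f]
  rw [aeval_def, aeval_def]
  apply MvPolynomial.eval₂_congr
  intro i c hic hcf
  have hv : i ∈ f.vars := by
    rw [MvPolynomial.mem_vars]
    exact ⟨c, by rwa [MvPolynomial.mem_support_iff], hic⟩
  rw [h i hv]

lemma shuffles_eq_singleton (γ₁ γ₂ : Fin n → ℕ) (hdisj : ∀ v, γ₁ v = 0 ∨ γ₂ v = 0) :
    shuffles γ₁ γ₂ = {fun i => Finset.range (γ₁ i)} := by
  ext S
  simp only [shuffles, Fintype.mem_piFinset, Finset.mem_filter, Finset.mem_powerset,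
    Finset.mem_singleton]
  constructor
  · intro hS
    funext i
    rcases hdisj i with h | h
    · have hc := (hS i).2
      rw [h] at hc
      rw [Finset.card_eq_zero.mp hc, h, Finset.range_zero]
    · have hsub : S i ⊆ Finset.range (γ₁ i) := by
        have := (hS i).1; rwa [h, add_zero] at this
      exact Finset.eq_of_subset_of_card_le hsub (by rw [Finset.card_range, (hS i).2])
  · rintro rfl i
    exact ⟨Finset.range_subset_range.mpr (Nat.le_add_right _ _), Finset.card_range _⟩

lemma cohaMul_eq_mul (Q : FinQuiver n) (γ₁ γ₂ : Fin n → ℕ) (f₁ f₂ : PolyQ n)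
    (h1 : ∀ p ∈ f₁.vars, p.2 < γ₁ p.1) (h2 : ∀ p ∈ f₂.vars, p.2 < γ₂ p.1)
    (hdisj : ∀ v, γ₁ v = 0 ∨ γ₂ v = 0)
    (harr : ∀ a : Q.Arr, γ₂ (Q.hd a) = 0 ∨ γ₁ (Q.tl a) = 0) :
    cohaMul Q γ₁ γ₂ f₁ f₂ = f₁ * f₂ := by
  set S₀ : Fin n → Finset ℕ := fun i => Finset.range (γ₁ i) with hS₀
  have hcompl : ∀ i, γ₁ i = 0 → shuffleCompl γ₁ γ₂ S₀ i = Finset.range (γ₂ i) := by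
    intro i hi; simp [shuffleCompl, hS₀, hi]
  have hcompl' : ∀ i, γ₂ i = 0 → shuffleCompl γ₁ γ₂ S₀ i = ∅ := by
    intro i hi; simp [shuffleCompl, hS₀, hi]
  have hden : interactionDen γ₁ γ₂ S₀ = 1 := by
    rw [interactionDen]
    apply Finset.prod_eq_one
    intro i _
    rcases hdisj i with h | h
    · have : S₀ i = ∅ := by simp [hS₀, h]
      rw [this]; simp
    · rw [hcompl' i h]; simp
  have hnum : interactionNum Q γ₁ γ₂ S₀ = 1 := by
    rw [interactionNum]
    apply Finset.prod_eq_one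
    intro a _
    rw [arrowFactor]
    rcases harr a with h | h
    · rw [hcompl' _ h]; simp
    · have : S₀ (Q.tl a) = ∅ := by simp [hS₀, h]
      rw [this]; simp
  have hsub1 : substAlong S₀ f₁ = f₁ := by
    apply substAlong_id
    intro p hp
    exact sort_range_getD (h1 p hp)
  have hsub2 : substAlong (shuffleCompl γ₁ γ₂ S₀) f₂ = f₂ := by
    apply substAlong_id
    intro p hp
    have h2p := h2 p hp
    have hγ1 : γ₁ p.1 = 0 := by
      rcases hdisj p.1 with h | h
      · exact h
      · omega
    rw [hcompl _ hγ1]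
    exact sort_range_getD h2p
  have hrat : cohaMulRat Q γ₁ γ₂ f₁ f₂ =
      algebraMap (PolyQ n) (FractionRing (PolyQ n)) (f₁ * f₂) := by
    rw [cohaMulRat, shuffles_eq_singleton γ₁ γ₂ hdisj, Finset.sum_singleton]
    rw [← hS₀, hsub1, hsub2, hnum, hden, mul_one, map_one, div_one]
  have hex : ∃ P : PolyQ n,
      algebraMap (PolyQ n) (FractionRing (PolyQ n)) P = cohaMulRat Q γ₁ γ₂ f₁ f₂ :=
    ⟨f₁ * f₂, hrat.symm⟩
  rw [cohaMul, dif_pos hex]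
  apply IsFractionRing.injective (PolyQ n) (FractionRing (PolyQ n))
  rw [hex.choose_spec, hrat]

lemma coha_foldl (Q : FinQuiver n) (hht : ∀ a : Q.Arr, Q.hd a < Q.tl a)
    (γ : Fin n → ℕ) (f : Fin n → PolyQ n)
    (hf : ∀ i, ∀ p ∈ (f i).vars, p.2 < (if p.1 = i then γ i else 0)) :
    ∀ (l : List (Fin n)) (d : Fin n → ℕ) (g : PolyQ n),
      List.Pairwise (· < ·) l →
      (∀ p ∈ g.vars, p.2 < d p.1) →
      (∀ v, d v ≠ 0 → ∀ i ∈ l, v < i) →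
      ((l.map fun i => ((fun v => if v = i then γ i else 0 : Fin n → ℕ), f i)).foldl
        (fun acc y => (acc.1 + y.1, cohaMul Q acc.1 y.1 acc.2 y.2)) (d, g)).2
        = g * (l.map f).prod := by
  intro l
  induction l with
  | nil => intro d g _ _ _; simp
  | cons i l ih =>
    intro d g hpw hg hlow
    have hpw' := (List.pairwise_cons.mp hpw).2
    have hhead := (List.pairwise_cons.mp hpw).1
    have hdi : d i = 0 := by
      by_contra hdi
      exact lt_irrefl i (hlow i hdi i List.mem_cons_self)
    have hmul : cohaMul Q d (fun v => if v = i then γ i else 0) g (f i) = g * f i := by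
      apply cohaMul_eq_mul Q _ _ _ _ hg (hf i)
      · intro v
        by_cases hv : v = i
        · subst hv; exact Or.inl hdi
        · exact Or.inr (if_neg hv)
      · intro a
        by_cases ha : Q.hd a = i
        · right
          by_contra hda
          have := hlow (Q.tl a) hda i List.mem_cons_self
          rw [← ha] at this
          exact absurd (hht a) (not_lt.mpr this.le)
        · exact Or.inl (if_neg ha)
    rw [List.map_cons, List.foldl_cons]
    simp only at hmul ⊢
    rw [hmul]
    rw [ih (d + fun v => if v = i then γ i else 0) (g * f i) hpw'
      (fun p hp => by
        rcases Finset.mem_union.mp (MvPolynomial.vars_mul _ _ hp) with h | h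
        · exact lt_of_lt_of_le (hg p h) (by simp [Pi.add_apply])
        · exact lt_of_lt_of_le (hf i p h) (by simp [Pi.add_apply]))
      (fun v hv j hj => by
        by_cases hdv : d v = 0
        · have : (if v = i then γ i else 0) ≠ 0 := by
            simpa [Pi.add_apply, hdv] using hv
          have hvi : v = i := by
            by_contra hvi; exact this (if_neg hvi)
          subst hvi
          exact hhead j hj
        · exact hlow v hdv j (List.mem_cons_of_mem _ hj))]
    rw [List.map_cons, List.prod_cons, mul_assoc]

end AuxCoha

/-- If the vertices of the acyclic quiver `Q` are ordered head before
tail, `γ` is a dimension vector and `f i ∈ ℋ_{γ(i)·e_i}` for each vertex `i`, then the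
left-to-right CoHA product is the ordinary product of polynomials:
`f₁ * ⋯ * f_n = ∏ᵢ fᵢ(ω_{i,1},…,ω_{i,γ(i)})` in `ℋ_γ`. -/
theorem coha_prod_of_simples {n : ℕ} (Q : FinQuiver n) (hQ : Q.Acyclic)
    (hht : ∀ a : Q.Arr, Q.hd a < Q.tl a)
    (γ : Fin n → ℕ) (f : Fin n → PolyQ n)
    (hf : ∀ i, f i ∈ Hspace (fun v => if v = i then γ i else 0)) :
    cohaProdFin Q (fun i v => if v = i then γ i else 0) f = ∏ i : Fin n, f i := by
  unfold cohaProdFin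
  cases n with
  | zero =>
    simp only [List.ofFn_zero]
    rw [cohaProd]
    simp
  | succ m =>
    rw [List.ofFn_succ]
    rw [cohaProd]
    have hfv : ∀ i, ∀ p ∈ (f i).vars, p.2 < (if p.1 = i then γ i else 0) :=
      fun i p hp => (hf i).1 p hp
    have hmap : (List.ofFn fun u : Fin m =>
        ((fun v => if v = (u.succ : Fin (m+1)) then γ u.succ else 0 : Fin (m+1) → ℕ),
          f u.succ))
        = (List.ofFn fun u : Fin m => (u.succ : Fin (m+1))).map
            (fun i => ((fun v => if v = i then γ i else 0 : Fin (m+1) → ℕ), f i)) := by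
      rw [List.map_ofFn]
      rfl
    rw [hmap]
    rw [coha_foldl Q hht γ f hfv _ _ _
      (by
        rw [List.pairwise_ofFn]
        intro a b hab
        exact Fin.succ_lt_succ_iff.mpr hab)
      (fun p hp => hfv 0 p hp)
      (fun v hv j hj => by
        have hv0 : v = 0 := by
          by_contra hv0
          exact hv (if_neg hv0)
        subst hv0
        rcases List.mem_ofFn.mp hj with ⟨u, rfl⟩
        exact Fin.succ_pos u)]
    rw [List.map_ofFn, List.prod_ofFn, Fin.prod_univ_succ]
    simp [Function.comp]
end

section
/- Let Q be a finite acyclic quiver whose vertex set Q₀ = {1,…,n} is ordered head-before-tail, i.e. h(a) < t(a) for every arrow a. For each vertex i and each m ≥ 0, identify the space Λ_m of symmetric polynomials over ℚ in m variables with ℋ_{m·e_i} (in the variables ω_{i,1},…,ω_{i,m}). Then the ℚ-linear map ⊕_γ (Λ_{γ(1)} ⊗ Λ_{γ(2)} ⊗ ⋯ ⊗ Λ_{γ(n)}) → ℋ(Q), sending f₁ ⊗ ⋯ ⊗ f_n (with f_i ∈ ℋ_{γ(i)·e_i}) to the left-to-right CoHA product f₁ * f₂ * ⋯ * f_n ∈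 ℋ_γ, is bijective; that is, the *-multiplication induces an isomorphism 𝒜_{e_1} ⊗ ⋯ ⊗ 𝒜_{e_n} ≅ ℋ(Q), where 𝒜_{e_i} = ⊕_{m≥0} ℋ_{m·e_i}. -/
open MvPolynomial
open scoped Classical

variable {n : ℕ}

open scoped TensorProduct DirectSum

/-! ### Auxiliary development -/

namespace CohaAux

open MvPolynomial

variable {n : ℕ}

lemma rename_eq_self_of_id_on_vars (g : Fin n × ℕ → Fin n × ℕ) (f : PolyQ n)
    (h : ∀ p ∈ f.vars, g p = p) : rename g f = f := by
  conv_lhs => rw [f.as_sum]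
  rw [map_sum]
  conv_rhs => rw [f.as_sum]
  refine Finset.sum_congr rfl fun u hu => ?_
  rw [rename_monomial]
  congr 1
  have hcongr : ∀ x ∈ u.support, g x = id x := fun x hx =>
    h x ((mem_vars x).2 ⟨u, hu, hx⟩)
  rw [Finsupp.mapDomain_congr hcongr, Finsupp.mapDomain_id]

lemma substAlong_eq_rename (T : Fin n → Finset ℕ) :
    substAlong T = rename (fun p : Fin n × ℕ => (p.1, ((T p.1).sort (· ≤ ·)).getD p.2 0)) :=
  MvPolynomial.algHom_ext fun p => by simp [substAlong]

lemma substAlong_eq_self (T : Fin n → Finset ℕ) (f : PolyQ n)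
    (h : ∀ p ∈ f.vars, ((T p.1).sort (· ≤ ·)).getD p.2 0 = p.2) :
    substAlong T f = f := by
  rw [substAlong_eq_rename]
  exact rename_eq_self_of_id_on_vars _ _ fun p hp => Prod.ext rfl (h p hp)

lemma getD_sort_range {k j : ℕ} (hj : j < k) :
    ((Finset.range k).sort (· ≤ ·)).getD j 0 = j := by
  rw [Finset.sort_range]
  rw [List.getD_eq_getElem _ _ (by simpa using hj)]
  simp

/-- The unique shuffle in the "simple right factor" situation. -/
lemma shuffles_simple (i : Fin n) (m : ℕ) (γ₁ : Fin n → ℕ) (h1 : γ₁ i = 0) :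
    shuffles γ₁ (fun v => if v = i then m else 0) =
      {fun v => Finset.range (γ₁ v)} := by
  ext S
  simp only [shuffles, Fintype.mem_piFinset, Finset.mem_filter, Finset.mem_powerset,
    Finset.mem_singleton]
  constructor
  · intro h
    funext v
    rcases h v with ⟨hsub, hcard⟩
    by_cases hv : v = i
    · subst hv
      rw [h1] at hcard ⊢
      rw [Finset.range_zero]
      exact Finset.card_eq_zero.mp hcard
    · rw [if_neg hv, add_zero] at hsub
      exact Finset.eq_of_subset_of_card_le hsub (by rw [hcard, Finset.card_range])
  · rintro rfl v
    refine ⟨Finset.range_subset_range.2 (Nat.le_add_right _ _), Finset.card_range _⟩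

lemma shuffleCompl_simple (i : Fin n) (m : ℕ) (γ₁ : Fin n → ℕ) (h1 : γ₁ i = 0) :
    shuffleCompl γ₁ (fun v => if v = i then m else 0) (fun v => Finset.range (γ₁ v)) =
      fun v => if v = i then Finset.range m else ∅ := by
  funext v
  by_cases hv : v = i
  · subst hv
    simp [shuffleCompl, h1]
  · simp [shuffleCompl, hv]

lemma cohaMul_simple (Q : FinQuiver n) (i : Fin n) (m : ℕ) (γ₁ : Fin n → ℕ)
    (f₁ f₂ : PolyQ n) (h1 : γ₁ i = 0)
    (h2 : ∀ a : Q.Arr, Q.hd a = i → γ₁ (Q.tl a) = 0)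
    (h3 : ∀ p ∈ f₁.vars, p.2 < γ₁ p.1)
    (h4 : ∀ p ∈ f₂.vars, p.1 = i ∧ p.2 < m) :
    cohaMul Q γ₁ (fun v => if v = i then m else 0) f₁ f₂ = f₁ * f₂ := by
  set γ₂ : Fin n → ℕ := fun v => if v = i then m else 0 with hγ₂
  set S₀ : Fin n → Finset ℕ := fun v => Finset.range (γ₁ v) with hS₀
  have hcompl : shuffleCompl γ₁ γ₂ S₀ = fun v => if v = i then Finset.range m else ∅ :=
    shuffleCompl_simple i m γ₁ h1
  have hsub1 : substAlong S₀ f₁ = f₁ := by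
    refine substAlong_eq_self _ _ fun p hp => ?_
    exact getD_sort_range (h3 p hp)
  have hsub2 : substAlong (shuffleCompl γ₁ γ₂ S₀) f₂ = f₂ := by
    refine substAlong_eq_self _ _ fun p hp => ?_
    rcases h4 p hp with ⟨hp1, hp2⟩
    rw [hcompl, hp1]
    simpa using getD_sort_range hp2
  have hnum : interactionNum Q γ₁ γ₂ S₀ = 1 := by
    rw [interactionNum]
    refine Finset.prod_eq_one fun a _ => ?_
    rw [arrowFactor]
    by_cases ha : Q.hd a = i
    · refine Finset.prod_eq_one fun j' _ => ?_
      have : S₀ (Q.tl a) = ∅ := by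
        rw [hS₀]
        simp [h2 a ha]
      rw [this, Finset.prod_empty]
    · rw [hcompl]
      simp [ha]
  have hden : interactionDen γ₁ γ₂ S₀ = 1 := by
    rw [interactionDen]
    refine Finset.prod_eq_one fun v _ => ?_
    by_cases hv : v = i
    · subst hv
      refine Finset.prod_eq_one fun j' _ => ?_
      have : S₀ v = ∅ := by rw [hS₀]; simp [h1]
      rw [this, Finset.prod_empty]
    · rw [hcompl]
      simp [hv]
  have hrat : cohaMulRat Q γ₁ γ₂ f₁ f₂ =
      algebraMap (PolyQ n) (FractionRing (PolyQ n)) (f₁ * f₂) := by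
    rw [cohaMulRat, shuffles_simple i m γ₁ h1, Finset.sum_singleton, ← hS₀,
      hsub1, hsub2, hnum, hden, mul_one, map_one, div_one]
  rw [cohaMul, dif_pos ⟨f₁ * f₂, hrat.symm⟩]
  generalize_proofs hP
  exact IsFractionRing.injective (PolyQ n) (FractionRing (PolyQ n))
    (hP.choose_spec.trans hrat)

end CohaAux

namespace CohaAux

open MvPolynomial

variable {n : ℕ}

/-- The dimension vector `γ i · e_i`. -/
def eps (γ : Fin n → ℕ) (i : Fin n) : Fin n → ℕ := fun v => if v = i then γ i else 0

lemma foldl_simple (Q : FinQuiver n) (hht : ∀ a : Q.Arr, Q.hd a < Q.tl a)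
    (γ : Fin n → ℕ) (f : Fin n → PolyQ n)
    (hf : ∀ i, ∀ p ∈ (f i).vars, p.1 = i ∧ p.2 < γ i) :
    ∀ (l : List (Fin n)), l.Pairwise (· < ·) →
    ∀ (acc : (Fin n → ℕ) × PolyQ n),
      (∀ v w, w ∈ l → acc.1 v ≠ 0 → v < w) →
      (∀ p ∈ acc.2.vars, p.2 < acc.1 p.1) →
      List.foldl (fun acc y => (acc.1 + y.1, cohaMul Q acc.1 y.1 acc.2 y.2)) acc
        (l.map (fun u => (eps γ u, f u)))
      = ((fun v => acc.1 v + if v ∈ l then γ v else 0), acc.2 * (l.map f).prod) := by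
  intro l
  induction l with
  | nil =>
    intro _ acc _ _
    simp
  | cons u l' ih =>
    intro hsort acc hinv1 hinv2
    have hsort' : l'.Pairwise (· < ·) := hsort.of_cons
    have hul' : ∀ w ∈ l', u < w := fun w hw => (List.pairwise_cons.mp hsort).1 w hw
    have h1 : acc.1 u = 0 := by
      by_contra h
      exact lt_irrefl u (hinv1 u u (List.mem_cons_self (a := u) (l := l')) h)
    have hmul : cohaMul Q acc.1 (eps γ u) acc.2 (f u) = acc.2 * f u := by
      refine cohaMul_simple Q u (γ u) acc.1 acc.2 (f u) h1 ?_ hinv2 (hf u)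
      intro a ha
      by_contra h
      have := hinv1 (Q.tl a) u (List.mem_cons_self (a := u) (l := l')) h
      rw [← ha] at this
      exact absurd (hht a) (not_lt.2 this.le)
    rw [List.map_cons, List.foldl_cons, hmul]
    rw [ih hsort' _ ?_ ?_]
    · refine Prod.ext ?_ ?_
      · funext v
        simp only
        by_cases hv : v = u
        · subst hv
          have : v ∉ l' := fun h => lt_irrefl v (hul' v h)
          simp [eps, this, h1]
        · have : (v ∈ u :: l') ↔ (v ∈ l') := by
            simp [List.mem_cons, hv]
          simp [eps, hv, this]
      · simp [mul_assoc]
    · intro v w hw hv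
      simp only [Prod.fst] at hv
      rcases Nat.eq_zero_or_pos (acc.1 v) with h0 | h0
      · have : eps γ u v ≠ 0 := by
          intro h
          apply hv
          simp [h0, h]
        have : v = u := by
          by_contra hvu
          exact this (by simp [eps, hvu])
        subst this
        exact hul' w hw
      · exact hinv1 v w (List.mem_cons_of_mem _ hw) h0.ne'
    · intro p hp
      rcases Finset.mem_union.mp (MvPolynomial.vars_mul _ _ hp) with h | h
      · exact lt_of_lt_of_le (hinv2 p h) (Nat.le_add_right _ _)
      · rcases hf u p h with ⟨hp1, hp2⟩
        have : eps γ u p.1 = γ u := by rw [hp1]; simp [eps]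
        simp only [Pi.add_apply, this]
        exact lt_of_lt_of_le (hp1 ▸ hp2 : p.2 < γ u) (by omega)

lemma cohaProdFin_eq_prod (Q : FinQuiver n) (hht : ∀ a : Q.Arr, Q.hd a < Q.tl a)
    (γ : Fin n → ℕ) (f : Fin n → PolyQ n)
    (hf : ∀ i, ∀ p ∈ (f i).vars, p.1 = i ∧ p.2 < γ i) :
    cohaProdFin Q (fun i => eps γ i) f = ∏ i, f i := by
  rw [cohaProdFin]
  cases n with
  | zero =>
    simp only [List.ofFn_zero]
    rw [cohaProd]
    simp
  | succ k =>
    have hlist : (List.ofFn fun u : Fin (k+1) => (eps γ u, f u)) =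
        (eps γ 0, f 0) :: ((List.finRange k).map Fin.succ).map (fun u => (eps γ u, f u)) := by
      rw [List.ofFn_eq_map, List.finRange_succ, List.map_cons, List.map_map]
    rw [hlist, cohaProd]
    have hsorted : (((List.finRange k).map Fin.succ) : List (Fin (k+1))).Pairwise (· < ·) := by
      refine List.Pairwise.map _ ?_ (List.pairwise_lt_finRange k)
      intro a b hab
      exact Fin.succ_lt_succ_iff.mpr hab
    rw [foldl_simple Q hht γ f hf _ hsorted ((eps γ 0, f 0)) ?_ ?_]
    · simp only
      rw [Fin.prod_univ_def, List.finRange_succ, List.map_cons, List.prod_cons,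
        List.map_map]
    · intro v w hw hv
      have hv0 : v = 0 := by
        by_contra h
        exact hv (by simp [eps, h])
      subst hv0
      rcases List.mem_map.mp hw with ⟨w', _, rfl⟩
      exact Fin.succ_pos w'
    · intro p hp
      rcases hf 0 p hp with ⟨hp1, hp2⟩
      rw [hp1]
      simpa [eps] using hp2

end CohaAux

namespace CohaAux

open MvPolynomial

variable {n : ℕ}

/-! ### Exponent bookkeeping -/

/-- The exponent finsupp `∑ j, e j · (i,j)` at a single vertex `i`. -/
noncomputable def finExp (i : Fin n) {m : ℕ} (e : Fin m → ℕ) : (Fin n × ℕ) →₀ ℕ :=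
  ∑ j : Fin m, Finsupp.single (i, (j : ℕ)) (e j)

lemma finExp_apply_ne (i : Fin n) {m : ℕ} (e : Fin m → ℕ) {v : Fin n} {k : ℕ}
    (h : v ≠ i) : finExp i e (v, k) = 0 := by
  rw [finExp, Finsupp.finset_sum_apply]
  refine Finset.sum_eq_zero fun j _ => ?_
  rw [Finsupp.single_apply, if_neg]
  intro hh
  exact h ((Prod.ext_iff.1 hh).1.symm)

lemma finExp_apply_coe (i : Fin n) {m : ℕ} (e : Fin m → ℕ) (j : Fin m) :
    finExp i e (i, (j : ℕ)) = e j := by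
  rw [finExp, Finsupp.finset_sum_apply]
  rw [Finset.sum_eq_single j]
  · rw [Finsupp.single_apply, if_pos rfl]
  · intro j' _ hj'
    rw [Finsupp.single_apply, if_neg]
    intro hh
    exact hj' (Fin.ext (congrArg Prod.snd hh))
  · intro h; exact absurd (Finset.mem_univ j) h

lemma finExp_apply_ge (i : Fin n) {m : ℕ} (e : Fin m → ℕ) {k : ℕ} (h : m ≤ k) :
    finExp i e (i, k) = 0 := by
  rw [finExp, Finsupp.finset_sum_apply]
  refine Finset.sum_eq_zero fun j _ => ?_
  rw [Finsupp.single_apply, if_neg]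
  intro hh
  have : (j : ℕ) = k := congrArg Prod.snd hh
  omega

lemma support_finExp (i : Fin n) {m : ℕ} (e : Fin m → ℕ) :
    ∀ p ∈ (finExp i e).support, p.1 = i ∧ p.2 < m := by
  rintro ⟨v, k⟩ hp
  rw [Finsupp.mem_support_iff] at hp
  by_cases hv : v = i
  · subst hv
    refine ⟨rfl, ?_⟩
    by_contra h
    exact hp (finExp_apply_ge v e (le_of_not_gt h))
  · exact absurd (finExp_apply_ne i e hv) hp

/-- The exponent finsupp of a family of tuples, one per vertex. -/
noncomputable def expOf (γ : Fin n → ℕ) (t : ∀ i, Fin (γ i) → ℕ) : (Fin n × ℕ) →₀ ℕ :=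
  ∑ i, finExp i (t i)

lemma expOf_apply_coe (γ : Fin n → ℕ) (t : ∀ i, Fin (γ i) → ℕ) (i : Fin n) (j : Fin (γ i)) :
    expOf γ t (i, (j : ℕ)) = t i j := by
  rw [expOf, Finsupp.finset_sum_apply]
  rw [Finset.sum_eq_single i]
  · exact finExp_apply_coe i (t i) j
  · intro i' _ hi'
    exact finExp_apply_ne i' (t i') (Ne.symm hi')
  · intro h; exact absurd (Finset.mem_univ i) h

lemma expOf_apply_ge (γ : Fin n → ℕ) (t : ∀ i, Fin (γ i) → ℕ) {v : Fin n} {k : ℕ}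
    (h : γ v ≤ k) : expOf γ t (v, k) = 0 := by
  rw [expOf, Finsupp.finset_sum_apply]
  refine Finset.sum_eq_zero fun i _ => ?_
  by_cases hv : v = i
  · subst hv; exact finExp_apply_ge v (t v) h
  · exact finExp_apply_ne i (t i) hv

lemma expOf_injective (γ : Fin n → ℕ) : Function.Injective (expOf γ) := by
  intro t t' h
  funext i j
  rw [← expOf_apply_coe γ t i j, ← expOf_apply_coe γ t' i j, h]

lemma support_expOf (γ : Fin n → ℕ) (t : ∀ i, Fin (γ i) → ℕ) :
    ∀ p ∈ (expOf γ t).support, p.2 < γ p.1 := by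
  rintro ⟨v, k⟩ hp
  rw [Finsupp.mem_support_iff] at hp
  by_contra h
  exact hp (expOf_apply_ge γ t (le_of_not_gt h))

/-- Restrict an exponent finsupp to the tuples of values at each vertex. -/
def restr (γ : Fin n → ℕ) (u : (Fin n × ℕ) →₀ ℕ) : ∀ i, Fin (γ i) → ℕ :=
  fun i j => u (i, (j : ℕ))

lemma expOf_restr (γ : Fin n → ℕ) (u : (Fin n × ℕ) →₀ ℕ)
    (h : ∀ p ∈ u.support, p.2 < γ p.1) : expOf γ (restr γ u) = u := by
  ext p
  obtain ⟨v, k⟩ := p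
  by_cases hk : k < γ v
  · exact expOf_apply_coe γ (restr γ u) v ⟨k, hk⟩
  · rw [expOf_apply_ge γ _ (le_of_not_gt hk)]
    by_contra hne
    exact hk (h (v, k) (Finsupp.mem_support_iff.2 fun h0 => hne h0.symm))

/-! ### Orbits of tuples under permutations -/

/-- The set of all permuted versions of a tuple. -/
noncomputable def orbitF (m : ℕ) (e : Fin m → ℕ) : Finset (Fin m → ℕ) :=
  Finset.image (fun σ : Equiv.Perm (Fin m) => e ∘ σ) Finset.univ

lemma mem_orbitF {m : ℕ} {e e' : Fin m → ℕ} :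
    e' ∈ orbitF m e ↔ ∃ σ : Equiv.Perm (Fin m), e ∘ σ = e' := by
  simp [orbitF]

lemma self_mem_orbitF {m : ℕ} (e : Fin m → ℕ) : e ∈ orbitF m e :=
  mem_orbitF.2 ⟨1, rfl⟩

/-- The sorted (monotone) version of a tuple. -/
def sortTup {m : ℕ} (e : Fin m → ℕ) : Fin m → ℕ := e ∘ Tuple.sort e

lemma monotone_sortTup {m : ℕ} (e : Fin m → ℕ) : Monotone (sortTup e) :=
  Tuple.monotone_sort e

lemma sortTup_mem_orbitF {m : ℕ} (e : Fin m → ℕ) : sortTup e ∈ orbitF m e :=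
  mem_orbitF.2 ⟨Tuple.sort e, rfl⟩

lemma mem_orbitF_symm {m : ℕ} {e e' : Fin m → ℕ} (h : e' ∈ orbitF m e) :
    e ∈ orbitF m e' := by
  obtain ⟨σ, rfl⟩ := mem_orbitF.1 h
  refine mem_orbitF.2 ⟨σ⁻¹, ?_⟩
  funext j
  simp

lemma mem_orbitF_trans {m : ℕ} {e e' e'' : Fin m → ℕ} (h : e' ∈ orbitF m e)
    (h' : e'' ∈ orbitF m e') : e'' ∈ orbitF m e := by
  obtain ⟨σ, rfl⟩ := mem_orbitF.1 h
  obtain ⟨σ', rfl⟩ := mem_orbitF.1 h'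
  exact mem_orbitF.2 ⟨σ * σ', rfl⟩

lemma eq_of_monotone_mem_orbitF {m : ℕ} {e e' : Fin m → ℕ} (h : e' ∈ orbitF m e)
    (he : Monotone e) (he' : Monotone e') : e = e' := by
  obtain ⟨σ, rfl⟩ := mem_orbitF.1 h
  have h1 : Monotone (e ∘ ⇑σ) := he'
  have h2 : Monotone (e ∘ ⇑(1 : Equiv.Perm (Fin m))) := he
  have := Tuple.unique_monotone h2 h1
  exact this

end CohaAux

namespace CohaAux

open MvPolynomial

variable {n : ℕ}

/-! ### The symmetrized monomials -/

/-- The monomial symmetric polynomial at vertex `i` with exponents `e`. -/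
noncomputable def vsym (i : Fin n) {m : ℕ} (e : Fin m → ℕ) : PolyQ n :=
  ∑ e' ∈ orbitF m e, monomial (finExp i e') (1 : ℚ)

/-- The product of the monomial symmetric polynomials at the various vertices. -/
noncomputable def psym (γ : Fin n → ℕ) (t : ∀ i, Fin (γ i) → ℕ) : PolyQ n :=
  ∑ t' ∈ Fintype.piFinset (fun i => orbitF (γ i) (t i)), monomial (expOf γ t') (1 : ℚ)

lemma prod_monomial_one {ι : Type*} (s : Finset ι) (u : ι → ((Fin n × ℕ) →₀ ℕ)) :
    ∏ i ∈ s, (monomial (u i) (1 : ℚ) : PolyQ n) = monomial (∑ i ∈ s, u i) 1 := by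
  induction s using Finset.cons_induction with
  | empty => simp [monomial_zero']
  | cons i s hi ih => rw [Finset.prod_cons, Finset.sum_cons, ih, monomial_mul, one_mul]

lemma prod_vsym_eq_psym (γ : Fin n → ℕ) (t : ∀ i, Fin (γ i) → ℕ) :
    ∏ i, vsym i (t i) = psym γ t := by
  rw [psym]
  rw [show ∏ i, vsym i (t i) =
      ∑ t' ∈ Fintype.piFinset (fun i => orbitF (γ i) (t i)),
        ∏ i, monomial (finExp i (t' i)) (1 : ℚ) from Finset.prod_univ_sum _ _]
  exact Finset.sum_congr rfl fun t' _ => prod_monomial_one _ _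

lemma vsym_of_zero {i : Fin n} {m : ℕ} (h : m = 0) (e : Fin m → ℕ) : vsym i e = 1 := by
  subst h
  have h1 : orbitF 0 e = {e} := by
    refine Finset.eq_singleton_iff_unique_mem.2 ⟨self_mem_orbitF e, fun e' he' => ?_⟩
    funext j
    exact absurd j.isLt (Nat.not_lt_zero _)
  have h2 : finExp i e = 0 := by
    rw [finExp]
    simp
  rw [vsym, h1, Finset.sum_singleton, h2, monomial_zero', C_1]

lemma vsym_comp_cast {i : Fin n} {m m' : ℕ} (h : m' = m) (e : Fin m → ℕ) :
    vsym i (e ∘ Fin.cast h) = vsym i e := by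
  subst h
  rfl

lemma coeff_psym_self (γ : Fin n → ℕ) (t t₀ : ∀ i, Fin (γ i) → ℕ)
    (h : t₀ ∈ Fintype.piFinset (fun i => orbitF (γ i) (t i))) :
    coeff (expOf γ t₀) (psym γ t) = 1 := by
  rw [psym, coeff_sum]
  rw [Finset.sum_eq_single t₀]
  · rw [coeff_monomial, if_pos rfl]
  · intro t' _ hne
    rw [coeff_monomial, if_neg fun hEq => hne (expOf_injective γ hEq)]
  · intro h'; exact absurd h h'

lemma coeff_psym_ne (γ : Fin n → ℕ) (t : ∀ i, Fin (γ i) → ℕ) (u : (Fin n × ℕ) →₀ ℕ)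
    (h : ∀ t' ∈ Fintype.piFinset (fun i => orbitF (γ i) (t i)), expOf γ t' ≠ u) :
    coeff u (psym γ t) = 0 := by
  rw [psym, coeff_sum]
  refine Finset.sum_eq_zero fun t' ht' => ?_
  rw [coeff_monomial, if_neg (h t' ht')]

lemma vars_vsym (i : Fin n) {m : ℕ} (e : Fin m → ℕ) :
    ∀ p ∈ (vsym i e).vars, p.1 = i ∧ p.2 < m := by
  intro p hp
  have := vars_sum_subset (t := orbitF m e)
    (φ := fun e' => (monomial (finExp i e') (1 : ℚ) : PolyQ n)) hp
  rw [Finset.mem_biUnion] at this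
  obtain ⟨e', _, hpe'⟩ := this
  rw [vars_monomial (one_ne_zero)] at hpe'
  exact support_finExp i e' p hpe'

lemma vars_psym (γ : Fin n → ℕ) (t : ∀ i, Fin (γ i) → ℕ) :
    ∀ p ∈ (psym γ t).vars, p.2 < γ p.1 := by
  intro p hp
  have := vars_sum_subset (t := Fintype.piFinset (fun i => orbitF (γ i) (t i)))
    (φ := fun t' => (monomial (expOf γ t') (1 : ℚ) : PolyQ n)) hp
  rw [Finset.mem_biUnion] at this
  obtain ⟨t', _, hpt'⟩ := this
  rw [vars_monomial (one_ne_zero)] at hpt'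
  exact support_expOf γ t' p hpt'

/-! ### Symmetry of `vsym` -/

lemma vertexPerm_apply_fst (i : Fin n) (σ : Equiv.Perm ℕ) (v : Fin n) (k : ℕ) :
    vertexPerm i σ (v, k) = if v = i then (i, σ k) else (v, k) := rfl

lemma vertexPerm_injective (i : Fin n) (σ : Equiv.Perm ℕ) :
    Function.Injective (vertexPerm i σ) := by
  have hli : Function.LeftInverse (vertexPerm i σ.symm) (vertexPerm i σ) := by
    rintro ⟨v, k⟩
    by_cases h : v = i
    · subst h; simp [vertexPerm]
    · simp [vertexPerm, h]
  exact hli.injective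

lemma mapDomain_finsetSum {ι : Type*} (g : (Fin n × ℕ) → (Fin n × ℕ)) (s : Finset ι)
    (h : ι → ((Fin n × ℕ) →₀ ℕ)) :
    Finsupp.mapDomain g (∑ i ∈ s, h i) = ∑ i ∈ s, Finsupp.mapDomain g (h i) := by
  induction s using Finset.cons_induction with
  | empty => simp
  | cons i s hi ih => rw [Finset.sum_cons, Finset.sum_cons, Finsupp.mapDomain_add, ih]

lemma mapDomain_vertexPerm_finExp_ne (i₀ i : Fin n) (h : i ≠ i₀) (σ : Equiv.Perm ℕ)
    {m : ℕ} (e : Fin m → ℕ) :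
    Finsupp.mapDomain (vertexPerm i₀ σ) (finExp i e) = finExp i e := by
  rw [finExp, mapDomain_finsetSum]
  refine Finset.sum_congr rfl fun j _ => ?_
  rw [Finsupp.mapDomain_single]
  congr 1
  rw [vertexPerm_apply_fst, if_neg h]

lemma mapDomain_vertexPerm_finExp (i₀ : Fin n) {m : ℕ} (σ : Equiv.Perm ℕ)
    (τ : Equiv.Perm (Fin m)) (hcomm : ∀ j : Fin m, σ (j : ℕ) = ((τ j : Fin m) : ℕ))
    (e : Fin m → ℕ) :
    Finsupp.mapDomain (vertexPerm i₀ σ) (finExp i₀ e) = finExp i₀ (e ∘ ⇑τ.symm) := by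
  rw [finExp, mapDomain_finsetSum]
  have hterm : ∀ j : Fin m,
      Finsupp.mapDomain (vertexPerm i₀ σ) (Finsupp.single ((i₀, (j : ℕ))) (e j)) =
        Finsupp.single (i₀, ((τ j : Fin m) : ℕ)) (e j) := by
    intro j
    rw [Finsupp.mapDomain_single, vertexPerm_apply_fst, if_pos rfl, hcomm j]
  rw [Finset.sum_congr rfl fun j _ => hterm j]
  rw [finExp]
  refine Fintype.sum_bijective τ τ.bijective _ _ fun j => ?_
  simp

/-- A permutation of `ℕ` supported on `[0, m)` restricts to a permutation of `Fin m`. -/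
lemma exists_restrict_perm {m : ℕ} (σ : Equiv.Perm ℕ) (hσ : ∀ j, σ j ≠ j → j < m) :
    ∃ τ : Equiv.Perm (Fin m), ∀ j : Fin m, σ (j : ℕ) = ((τ j : Fin m) : ℕ) := by
  have hfix : ∀ j, m ≤ j → σ j = j := by
    intro j hj
    by_contra h
    exact absurd (hσ j h) (not_lt.2 hj)
  have hmem : ∀ x, x < m ↔ σ x < m := by
    intro x
    constructor
    · intro hx
      by_contra h
      have h1 : σ (σ x) = σ x := hfix _ (le_of_not_gt h)
      have h2 : σ x = x := σ.injective h1
      omega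
    · intro hx
      by_contra h
      rw [hfix x (le_of_not_gt h)] at hx
      exact h hx
  refine ⟨(Fin.equivSubtype.trans (σ.subtypePerm fun x => (hmem x).symm)).trans Fin.equivSubtype.symm,
    fun j => ?_⟩
  rfl

lemma rename_vertexPerm_vsym_self (i : Fin n) {m : ℕ} (e : Fin m → ℕ) (σ : Equiv.Perm ℕ)
    (hσ : ∀ j, σ j ≠ j → j < m) :
    rename (vertexPerm i σ) (vsym i e) = vsym i e := by
  obtain ⟨τ, hτ⟩ := exists_restrict_perm σ hσ
  rw [vsym, map_sum]
  have hterm : ∀ e' ∈ orbitF m e,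
      rename (vertexPerm i σ) (monomial (finExp i e') (1 : ℚ)) =
        monomial (finExp i (e' ∘ ⇑τ.symm)) (1 : ℚ) := by
    intro e' _
    rw [rename_monomial, mapDomain_vertexPerm_finExp i σ τ hτ e']
  rw [Finset.sum_congr rfl hterm]
  refine Finset.sum_bij' (fun e' _ => e' ∘ ⇑τ.symm) (fun e'' _ => e'' ∘ ⇑τ) ?_ ?_ ?_ ?_ ?_
  · intro e' he'
    obtain ⟨σ', rfl⟩ := mem_orbitF.1 he'
    refine mem_orbitF.2 ⟨σ' * (τ.symm : Equiv.Perm (Fin m)), ?_⟩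
    rfl
  · intro e'' he''
    obtain ⟨σ', rfl⟩ := mem_orbitF.1 he''
    exact mem_orbitF.2 ⟨σ' * τ, rfl⟩
  · intro e' _
    funext j
    simp
  · intro e'' _
    funext j
    simp
  · intro e' _
    rfl

lemma rename_vertexPerm_vsym_ne (i₀ i : Fin n) (h : i ≠ i₀) {m : ℕ} (e : Fin m → ℕ)
    (σ : Equiv.Perm ℕ) :
    rename (vertexPerm i₀ σ) (vsym i e) = vsym i e := by
  refine rename_eq_self_of_id_on_vars _ _ fun p hp => ?_
  have h1 := (vars_vsym i e p hp).1
  obtain ⟨v, k⟩ := p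
  rw [vertexPerm_apply_fst, if_neg]
  rw [show v = i from h1]
  exact h

/-! ### Membership in `Hspace` -/

lemma prod_mem_Hspace (γ : Fin n → ℕ) (f : Fin n → PolyQ n)
    (hf : ∀ i, f i ∈ Hspace (eps γ i)) : (∏ i, f i) ∈ Hspace γ := by
  constructor
  · intro p hp
    have := MvPolynomial.vars_prod (s := Finset.univ) f hp
    rw [Finset.mem_biUnion] at this
    obtain ⟨i, _, hpi⟩ := this
    have h2 := (hf i).1 p hpi
    by_cases h : p.1 = i
    · rw [eps, if_pos h] at h2
      rw [← h] at h2
      exact h2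
    · rw [eps, if_neg h] at h2
      omega
  · intro i₀ σ hσ
    rw [map_prod]
    refine Finset.prod_congr rfl fun i _ => ?_
    by_cases h : i = i₀
    · subst h
      refine (hf i).2 i σ fun j hj => ?_
      have := hσ j hj
      rw [eps, if_pos rfl]
      exact this
    · refine rename_eq_self_of_id_on_vars _ _ fun p hp => ?_
      have h1 := (hf i).1 p hp
      have hp1 : p.1 = i := by
        by_contra hc
        rw [eps, if_neg hc] at h1
        omega
      obtain ⟨v, k⟩ := p
      rw [vertexPerm_apply_fst, if_neg]
      rw [show v = i from hp1]
      exact h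

lemma psym_mem_Hspace (γ : Fin n → ℕ) (t : ∀ i, Fin (γ i) → ℕ) :
    psym γ t ∈ Hspace γ := by
  constructor
  · exact vars_psym γ t
  · intro i₀ σ hσ
    rw [← prod_vsym_eq_psym, map_prod]
    refine Finset.prod_congr rfl fun i _ => ?_
    by_cases h : i = i₀
    · subst h
      exact rename_vertexPerm_vsym_self i (t i) σ hσ
    · exact rename_vertexPerm_vsym_ne i₀ i h (t i) σ

lemma vsym_mem_Hspace (γ : Fin n → ℕ) (i : Fin n) (e : Fin (γ i) → ℕ) :
    vsym i e ∈ Hspace (eps γ i) := by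
  constructor
  · intro p hp
    obtain ⟨h1, h2⟩ := vars_vsym i e p hp
    rw [h1, eps, if_pos rfl]
    exact h2
  · intro i₀ σ hσ
    by_cases h : i = i₀
    · subst h
      refine rename_vertexPerm_vsym_self i e σ fun j hj => ?_
      have := hσ j hj
      rw [eps, if_pos rfl] at this
      exact this
    · exact rename_vertexPerm_vsym_ne i₀ i h e σ

end CohaAux

namespace CohaAux

open MvPolynomial

variable {n : ℕ}

/-! ### Orbit-constancy of coefficients of symmetric polynomials -/

/-- Extension of a permutation of `Fin m` to a permutation of `ℕ`. -/
noncomputable def permExt {m : ℕ} (τ : Equiv.Perm (Fin m)) : Equiv.Perm ℕ :=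
  τ.extendDomain Fin.equivSubtype

lemma permExt_support {m : ℕ} (τ : Equiv.Perm (Fin m)) :
    ∀ j, permExt τ j ≠ j → j < m := by
  intro j hj
  by_contra h
  exact hj (Equiv.Perm.extendDomain_apply_not_subtype τ Fin.equivSubtype (by omega))

lemma permExt_coe {m : ℕ} (τ : Equiv.Perm (Fin m)) (j : Fin m) :
    permExt τ ((j : Fin m) : ℕ) = ((τ j : Fin m) : ℕ) := by
  exact Equiv.Perm.extendDomain_apply_image τ Fin.equivSubtype j

lemma coeff_single_step (γ : Fin n → ℕ) (f : PolyQ n) (hsymm : SymmIn γ f)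
    (t : ∀ i, Fin (γ i) → ℕ) (i₀ : Fin n) (τ : Equiv.Perm (Fin (γ i₀))) :
    coeff (expOf γ (Function.update t i₀ (t i₀ ∘ ⇑τ))) f = coeff (expOf γ t) f := by
  set σ := permExt τ with hσdef
  have hσ : ∀ j, σ j ≠ j → j < γ i₀ := permExt_support τ
  have hr : rename (vertexPerm i₀ σ) f = f := hsymm i₀ σ hσ
  have hkey := coeff_rename_mapDomain (vertexPerm i₀ σ) (vertexPerm_injective i₀ σ) f
    (expOf γ (Function.update t i₀ (t i₀ ∘ ⇑τ)))
  rw [hr] at hkey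
  have hmap : Finsupp.mapDomain (vertexPerm i₀ σ)
      (expOf γ (Function.update t i₀ (t i₀ ∘ ⇑τ))) = expOf γ t := by
    rw [expOf, mapDomain_finsetSum, expOf]
    refine Finset.sum_congr rfl fun i _ => ?_
    by_cases h : i = i₀
    · subst h
      rw [Function.update_self]
      rw [mapDomain_vertexPerm_finExp i σ τ (fun j => permExt_coe τ j) (t i ∘ ⇑τ)]
      congr 1
      funext j
      simp
    · rw [Function.update_of_ne h]
      exact mapDomain_vertexPerm_finExp_ne i₀ i h σ (t i)
  rw [hmap] at hkey
  exact hkey.symm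

lemma coeff_orbit_constant (γ : Fin n → ℕ) (f : PolyQ n) (hsymm : SymmIn γ f) :
    ∀ (s : Finset (Fin n)) (t t' : ∀ i, Fin (γ i) → ℕ),
      (∀ i, t' i ∈ orbitF (γ i) (t i)) →
      (∀ i ∉ s, t' i = t i) →
      coeff (expOf γ t') f = coeff (expOf γ t) f := by
  intro s
  induction s using Finset.induction_on with
  | empty =>
    intro t t' _ h
    have : t' = t := funext fun i => h i (Finset.notMem_empty i)
    rw [this]
  | @insert i₀ s hi₀ ih =>
    intro t t' hall hout
    obtain ⟨τ, hτ⟩ := mem_orbitF.1 (hall i₀)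
    set t'' := Function.update t' i₀ (t i₀) with ht''
    have h1 : coeff (expOf γ t'') f = coeff (expOf γ t) f := by
      refine ih t t'' (fun i => ?_) (fun i his => ?_)
      · by_cases h : i = i₀
        · subst h
          rw [ht'', Function.update_self]
          exact self_mem_orbitF (t i)
        · rw [ht'', Function.update_of_ne h]
          exact hall i
      · by_cases h : i = i₀
        · subst h
          rw [ht'', Function.update_self]
        · rw [ht'', Function.update_of_ne h]
          exact hout i (by simp [h, his])
    have hupd : t' = Function.update t'' i₀ (t'' i₀ ∘ ⇑τ) := by
      funext i
      by_cases h : i = i₀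
      · subst h
        rw [Function.update_self, ht'', Function.update_self, ← hτ]
      · rw [Function.update_of_ne h, ht'', Function.update_of_ne h]
    rw [hupd, coeff_single_step γ f hsymm t'' i₀ τ, h1]

/-! ### The basis of `Hspace γ` -/

/-- Index type for the basis of `Hspace γ`: a monotone tuple at each vertex. -/
def MonoIdx (γ : Fin n → ℕ) : Type := ∀ i, {e : Fin (γ i) → ℕ // Monotone e}

/-- The basis family of `Hspace γ`. -/
noncomputable def psymFam (γ : Fin n → ℕ) (d : MonoIdx γ) : PolyQ n :=
  psym γ (fun i => (d i).1)

lemma psymFam_linearIndependent (γ : Fin n → ℕ) :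
    LinearIndependent ℚ (psymFam γ) := by
  rw [linearIndependent_iff']
  intro s g hsum d₀ hd₀
  have hc := congrArg (coeff (expOf γ (fun i => (d₀ i).1))) hsum
  rw [coeff_sum, coeff_zero] at hc
  have hterm : ∀ d ∈ s,
      coeff (expOf γ fun i => (d₀ i).1) (g d • psymFam γ d) =
        if d = d₀ then g d else 0 := by
    intro d _
    rw [coeff_smul]
    by_cases h : d = d₀
    · subst h
      rw [if_pos rfl, psymFam, coeff_psym_self γ _ _ (by
        rw [Fintype.mem_piFinset]
        exact fun i => self_mem_orbitF _), smul_eq_mul, mul_one]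
    · rw [if_neg h, psymFam, coeff_psym_ne, smul_eq_mul, mul_zero]
      intro t' ht' hEq
      apply h
      have ht'' : t' = fun i => (d₀ i).1 := expOf_injective γ hEq
      rw [Fintype.mem_piFinset] at ht'
      funext i
      refine Subtype.ext ?_
      refine eq_of_monotone_mem_orbitF ?_ (d i).2 (d₀ i).2
      have := ht' i
      rw [ht''] at this
      exact this
  rw [Finset.sum_congr rfl hterm, Finset.sum_ite_eq' s d₀ g, if_pos hd₀] at hc
  exact hc

/-- The sorted index of an admissible exponent. -/
noncomputable def sortIdx (γ : Fin n → ℕ) (u : (Fin n × ℕ) →₀ ℕ) : MonoIdx γ :=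
  fun i => ⟨sortTup (restr γ u i), monotone_sortTup _⟩

lemma mem_span_psymFam (γ : Fin n → ℕ) (f : PolyQ n) (hf : f ∈ Hspace γ) :
    f ∈ Submodule.span ℚ (Set.range (psymFam γ)) := by
  obtain ⟨hvars, hsymm⟩ := hf
  have hadm : ∀ u ∈ f.support, ∀ p ∈ u.support, p.2 < γ p.1 := by
    intro u hu p hp
    exact hvars p ((mem_vars p).2 ⟨u, hu, hp⟩)
  set T : Finset (MonoIdx γ) := f.support.image (sortIdx γ) with hT
  have key : f = ∑ d ∈ T, coeff (expOf γ fun i => (d i).1) f • psymFam γ d := by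
    refine MvPolynomial.ext _ _ fun u => ?_
    rw [coeff_sum]
    by_cases hadmu : ∀ p ∈ u.support, p.2 < γ p.1
    · -- admissible exponent
      have hu : expOf γ (restr γ u) = u := expOf_restr γ u hadmu
      have hsame : ∀ i, sortTup (restr γ u i) ∈ orbitF (γ i) (restr γ u i) :=
        fun i => sortTup_mem_orbitF _
      have hterm : ∀ d ∈ T, coeff u (coeff (expOf γ fun i => (d i).1) f • psymFam γ d) =
          if d = sortIdx γ u then coeff (expOf γ fun i => (d i).1) f else 0 := by
        intro d _
        rw [coeff_smul]
        by_cases h : d = sortIdx γ u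
        · subst h
          rw [if_pos rfl, psymFam]
          have hself : coeff (expOf γ (restr γ u))
              (psym γ fun i => ((sortIdx γ u) i).1) = 1 := by
            refine coeff_psym_self _ _ _ ?_
            rw [Fintype.mem_piFinset]
            intro i
            exact mem_orbitF_symm (sortTup_mem_orbitF _)
          rw [hu] at hself
          rw [hself, smul_eq_mul, mul_one]
        · rw [if_neg h, psymFam, coeff_psym_ne, smul_eq_mul, mul_zero]
          intro t' ht' hEq
          apply h
          have ht'' : t' = restr γ u := expOf_injective γ (hEq.trans hu.symm)
          rw [Fintype.mem_piFinset] at ht'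
          funext i
          refine Subtype.ext ?_
          refine eq_of_monotone_mem_orbitF ?_ (d i).2 ((sortIdx γ u i).2)
          have h1 : restr γ u i ∈ orbitF (γ i) ((d i).1) := ht'' ▸ ht' i
          exact mem_orbitF_trans h1 (hsame i)
      rw [Finset.sum_congr rfl hterm]
      rw [Finset.sum_ite_eq' T (sortIdx γ u) (fun d => coeff (expOf γ fun i => (d i).1) f)]
      have hcoeq : coeff (expOf γ fun i => ((sortIdx γ u) i).1) f = coeff u f := by
        have := coeff_orbit_constant γ f hsymm Finset.univ (restr γ u)
          (fun i => ((sortIdx γ u) i).1) (fun i => hsame i) (fun i hi => absurd (Finset.mem_univ i) hi)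
        rw [hu] at this
        exact this
      by_cases hmem : sortIdx γ u ∈ T
      · rw [if_pos hmem, hcoeq]
      · rw [if_neg hmem]
        by_contra hne
        have : u ∈ f.support := by
          rw [MvPolynomial.mem_support_iff]
          exact hne
        exact hmem (hT ▸ Finset.mem_image_of_mem (sortIdx γ) this)
    · -- non-admissible exponent
      have h0 : coeff u f = 0 := by
        by_contra h
        exact hadmu (hadm u (MvPolynomial.mem_support_iff.2 h))
      rw [h0]
      symm
      refine Finset.sum_eq_zero fun d _ => ?_
      rw [coeff_smul, psymFam, coeff_psym_ne, smul_eq_mul, mul_zero]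
      intro t' _ hEq
      apply hadmu
      intro p hp
      exact support_expOf γ t' p (hEq ▸ hp)
  rw [key]
  exact Submodule.sum_mem _ fun d _ =>
    Submodule.smul_mem _ _ (Submodule.subset_span ⟨d, rfl⟩)

/-- The basis family of `Hspace γ`, as elements of the submodule. -/
noncomputable def vH (γ : Fin n → ℕ) (d : MonoIdx γ) : ↥(Hspace γ) :=
  ⟨psymFam γ d, psym_mem_Hspace γ _⟩

noncomputable def basisH (γ : Fin n → ℕ) : Module.Basis (MonoIdx γ) ℚ ↥(Hspace γ) := by
  refine Module.Basis.mk (v := vH γ) ?_ ?_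
  · refine LinearIndependent.of_comp (Hspace γ).subtype ?_
    exact psymFam_linearIndependent γ
  · rintro x -
    have hx : (x : PolyQ n) ∈ Submodule.span ℚ (Set.range (psymFam γ)) :=
      mem_span_psymFam γ x.1 x.2
    have himg : Set.range (psymFam γ) = (Hspace γ).subtype '' Set.range (vH γ) := by
      rw [← Set.range_comp]
      rfl
    rw [himg, ← Submodule.map_span] at hx
    obtain ⟨y, hy, hyx⟩ := hx
    have : y = x := Subtype.ext hyx
    exact this ▸ hy

lemma basisH_apply (γ : Fin n → ℕ) (d : MonoIdx γ) : basisH γ d = vH γ d := by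
  rw [basisH, Module.Basis.mk_apply]

end CohaAux

namespace CohaAux

open MvPolynomial

variable {n : ℕ}

/-! ### The multiplication equivalence -/

/-- Multiplication as a multilinear map on the vertex subspaces. -/
noncomputable def mulML (γ : Fin n → ℕ) :
    MultilinearMap ℚ (fun i : Fin n => ↥(Hspace (eps γ i))) ↥(Hspace γ) :=
  ((MultilinearMap.mkPiAlgebra ℚ (Fin n) (PolyQ n)).compLinearMap
      (fun i => (Hspace (eps γ i)).subtype)).codRestrict (Hspace γ)
    (fun v => prod_mem_Hspace γ _ (fun i => (v i).2))

lemma coe_mulML (γ : Fin n → ℕ) (v : ∀ i : Fin n, ↥(Hspace (eps γ i))) :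
    ((mulML γ v : ↥(Hspace γ)) : PolyQ n) = ∏ i, ((v i : PolyQ n)) := rfl

/-- From monotone data at each vertex to monotone data for `eps γ i` at each vertex. -/
noncomputable def theta (γ : Fin n → ℕ) (d : MonoIdx γ) (i : Fin n) : MonoIdx (eps γ i) :=
  fun v =>
    if h : v = i then
      ⟨(d i).1 ∘ Fin.cast (show eps γ i v = γ i by rw [eps, if_pos h]),
        fun a b hab => (d i).2 hab⟩
    else ⟨fun _ => 0, monotone_const⟩

/-- The converse direction. -/
noncomputable def PsiI (γ : Fin n → ℕ) (w : ∀ i, MonoIdx (eps γ i)) : MonoIdx γ :=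
  fun i => ⟨(w i i).1 ∘ Fin.cast (show γ i = eps γ i i by rw [eps, if_pos rfl]),
    fun a b hab => (w i i).2 hab⟩

lemma comp_cast_comp_cast {A : Type*} {a b : ℕ} (e : Fin a → A) (h1 : b = a) (h2 : a = b) :
    ((e ∘ Fin.cast h1) ∘ Fin.cast h2) = e := by
  subst h1
  rfl

lemma theta_PsiI (γ : Fin n → ℕ) (w : ∀ i, MonoIdx (eps γ i)) (i : Fin n) :
    theta γ (PsiI γ w) i = w i := by
  funext v
  by_cases h : v = i
  · subst h
    refine Subtype.ext ?_
    rw [theta, dif_pos rfl]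
    exact comp_cast_comp_cast (w v v).1
      (show γ v = eps γ v v by rw [eps, if_pos rfl])
      (show eps γ v v = γ v by rw [eps, if_pos rfl])
  · refine Subtype.ext ?_
    rw [theta, dif_neg h]
    refine funext fun j => ?_
    have h0 : eps γ i v = 0 := by rw [eps, if_neg h]
    exact absurd j.isLt (by omega)

lemma PsiI_theta (γ : Fin n → ℕ) (d : MonoIdx γ) : PsiI γ (theta γ d) = d := by
  funext i
  refine Subtype.ext ?_
  show ((theta γ d i i).1 ∘ Fin.cast _) = (d i).1
  rw [theta, dif_pos rfl]
  exact comp_cast_comp_cast (d i).1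
    (show eps γ i i = γ i by rw [eps, if_pos rfl])
    (show γ i = eps γ i i by rw [eps, if_pos rfl])

lemma prod_psym_eps (γ : Fin n → ℕ) (w : ∀ i, MonoIdx (eps γ i)) :
    ∏ i, psymFam (eps γ i) (w i) = psymFam γ (PsiI γ w) := by
  have h1 : ∀ i, psymFam (eps γ i) (w i) = vsym i ((w i i).1) := by
    intro i
    rw [psymFam, ← prod_vsym_eq_psym]
    refine Finset.prod_eq_single_of_mem i (Finset.mem_univ i) ?_
    intro v _ hv
    exact vsym_of_zero (by rw [eps, if_neg hv]) _
  rw [Finset.prod_congr rfl fun i _ => h1 i]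
  rw [psymFam, ← prod_vsym_eq_psym]
  refine Finset.prod_congr rfl fun i _ => ?_
  exact (vsym_comp_cast _ _).symm

noncomputable def muH (γ : Fin n → ℕ) :
    (⨂[ℚ] i, ↥(Hspace (eps γ i))) →ₗ[ℚ] ↥(Hspace γ) :=
  PiTensorProduct.lift (mulML γ)

noncomputable def nuH (γ : Fin n → ℕ) :
    ↥(Hspace γ) →ₗ[ℚ] ⨂[ℚ] i, ↥(Hspace (eps γ i)) :=
  (basisH γ).constr ℚ fun d =>
    PiTensorProduct.tprod ℚ fun i => basisH (eps γ i) (theta γ d i)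

lemma muH_tprod_basis (γ : Fin n → ℕ) (w : ∀ i, MonoIdx (eps γ i)) :
    muH γ (PiTensorProduct.tprod ℚ fun i => basisH (eps γ i) (w i)) =
      basisH γ (PsiI γ w) := by
  rw [muH, PiTensorProduct.lift.tprod]
  refine Subtype.ext ?_
  rw [coe_mulML, basisH_apply]
  have : ∀ i, ((basisH (eps γ i) (w i) : ↥(Hspace (eps γ i))) : PolyQ n) =
      psymFam (eps γ i) (w i) := by
    intro i
    rw [basisH_apply]
    rfl
  rw [Finset.prod_congr rfl fun i _ => this i]
  exact prod_psym_eps γ w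

noncomputable def eqvH (γ : Fin n → ℕ) :
    (⨂[ℚ] i, ↥(Hspace (eps γ i))) ≃ₗ[ℚ] ↥(Hspace γ) := by
  refine LinearEquiv.ofLinear (muH γ) (nuH γ) ?_ ?_
  · refine (basisH γ).ext fun d => ?_
    rw [LinearMap.comp_apply, LinearMap.id_apply, nuH, Module.Basis.constr_basis]
    rw [muH_tprod_basis γ (theta γ d), PsiI_theta]
  · refine PiTensorProduct.ext ?_
    refine Module.Basis.ext_multilinear (fun i => basisH (eps γ i)) fun w => ?_
    rw [LinearMap.compMultilinearMap_apply, LinearMap.compMultilinearMap_apply,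
      LinearMap.comp_apply, LinearMap.id_apply]
    rw [muH_tprod_basis γ w, nuH, Module.Basis.constr_basis]
    congr 1
    funext i
    rw [theta_PsiI]

lemma eqvH_tprod (γ : Fin n → ℕ) (f : ∀ i, ↥(Hspace (eps γ i))) :
    ((eqvH γ (PiTensorProduct.tprod ℚ f) : ↥(Hspace γ)) : PolyQ n) =
      ∏ i, ((f i : PolyQ n)) := by
  rw [eqvH, LinearEquiv.ofLinear_apply, muH, PiTensorProduct.lift.tprod, coe_mulML]

end CohaAux

namespace CohaAux

variable {n : ℕ}

/-- The full direct-sum equivalence. -/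
noncomputable def PhiEquiv (n : ℕ) :
    (⨁ γ : Fin n → ℕ, ⨂[ℚ] i : Fin n, ↥(Hspace (eps γ i))) ≃ₗ[ℚ]
      ⨁ γ : Fin n → ℕ, ↥(Hspace γ) :=
  DFinsupp.mapRange.linearEquiv fun γ => eqvH γ

set_option synthInstance.maxHeartbeats 1000000 in
lemma PhiEquiv_of (γ : Fin n → ℕ) (x : ⨂[ℚ] i : Fin n, ↥(Hspace (eps γ i))) :
    PhiEquiv n (DirectSum.of (fun γ' : Fin n → ℕ =>
        ⨂[ℚ] i : Fin n, ↥(Hspace (eps γ' i))) γ x) =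
      DirectSum.of (fun γ' : Fin n → ℕ => ↥(Hspace γ')) γ (eqvH γ x) := by
  exact DFinsupp.mapRange_single
    (β₁ := fun γ' : Fin n → ℕ => ⨂[ℚ] i : Fin n, ↥(Hspace (eps γ' i)))
    (β₂ := fun γ' : Fin n → ℕ => ↥(Hspace γ'))
    (f := fun γ' y => eqvH γ' y)
    (hf := fun γ' => (eqvH γ').map_zero) (i := γ) (b := x)

end CohaAux
/-- Let `Q` be a finite acyclic quiver whose vertices are ordered
head before tail.  Identifying symmetric polynomials in `m` variables with
`ℋ_{m·e_i}`, the `ℚ`-linear map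
`⊕_γ (Λ_{γ(1)} ⊗ ⋯ ⊗ Λ_{γ(n)}) → ℋ(Q) = ⊕_γ ℋ_γ`, sending `f₁ ⊗ ⋯ ⊗ f_n` to the
left-to-right CoHA product `f₁ * ⋯ * f_n ∈ ℋ_γ`, is bijective; that is, the
`*`-multiplication induces an isomorphism `𝒜_{e_1} ⊗ ⋯ ⊗ 𝒜_{e_n} ≅ ℋ(Q)`. -/
theorem coha_simple_decomposition {n : ℕ} (Q : FinQuiver n) (hQ : Q.Acyclic)
    (hht : ∀ a : Q.Arr, Q.hd a < Q.tl a) :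
    ∃ Φ : (⨁ γ : Fin n → ℕ,
            ⨂[ℚ] i : Fin n, ↥(Hspace fun v => if v = i then γ i else 0))
        →ₗ[ℚ] ⨁ γ : Fin n → ℕ, ↥(Hspace γ),
      (∀ (γ : Fin n → ℕ)
          (f : (i : Fin n) → ↥(Hspace fun v => if v = i then γ i else 0)),
        ∃ hmem : cohaProdFin Q (fun i v => if v = i then γ i else 0)
            (fun i => (f i : PolyQ n)) ∈ Hspace γ,
          Φ (DirectSum.of (fun γ' : Fin n → ℕ =>
                ⨂[ℚ] i : Fin n, ↥(Hspace fun v => if v = i then γ' i else 0)) γ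
              (PiTensorProduct.tprod ℚ f)) =
            DirectSum.of (fun γ' : Fin n → ℕ => ↥(Hspace γ')) γ
              ⟨cohaProdFin Q (fun i v => if v = i then γ i else 0)
                (fun i => (f i : PolyQ n)), hmem⟩) ∧
      Function.Bijective Φ := by
  refine ⟨(CohaAux.PhiEquiv n).toLinearMap, ?_, (CohaAux.PhiEquiv n).bijective⟩
  intro γ f
  have hvars : ∀ i, ∀ p ∈ (f i : PolyQ n).vars, p.1 = i ∧ p.2 < γ i := by
    intro i p hp
    have h := (f i).2.1 p hp
    by_cases hc : p.1 = i
    · exact ⟨hc, by simpa [hc] using h⟩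
    · simp [hc] at h
  have hprod : cohaProdFin Q (fun i v => if v = i then γ i else 0)
      (fun i => (f i : PolyQ n)) = ∏ i, (f i : PolyQ n) :=
    CohaAux.cohaProdFin_eq_prod Q hht γ _ hvars
  have hmem : cohaProdFin Q (fun i v => if v = i then γ i else 0)
      (fun i => (f i : PolyQ n)) ∈ Hspace γ := by
    rw [hprod]
    exact CohaAux.prod_mem_Hspace γ _ fun i => (f i).2
  refine ⟨hmem, ?_⟩
  have h1 := CohaAux.PhiEquiv_of γ (PiTensorProduct.tprod ℚ f)
  refine h1.trans ?_
  refine congrArg _ (Subtype.ext ?_)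
  rw [CohaAux.eqvH_tprod γ f]
  exact hprod.symm
end

section
/- In ℋ(A₁), the elements ψ_p = x₁^p ∈ ℋ₁(A₁) anticommute: for all nonnegative integers p and q, ψ_p * ψ_q = − ψ_q * ψ_p in ℋ₂(A₁); in particular ψ_p * ψ_p = 0. -/
open MvPolynomial
open scoped Classical

variable {n : ℕ}

lemma shuffles_one : shuffles oneDim oneDim =
    {fun _ => ({0} : Finset ℕ), fun _ => {1}} := by decide

lemma substAlong_psi (S : Fin 1 → Finset ℕ) (p : ℕ) :
    substAlong S (psi p) = X ((0 : Fin 1), ((S 0).sort (· ≤ ·)).getD 0 0) ^ p := by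
  simp [substAlong, psi]

lemma compl0 : shuffleCompl oneDim oneDim (fun _ => ({0} : Finset ℕ)) = fun _ => {1} := by
  funext i; fin_cases i; decide

lemma compl1 : shuffleCompl oneDim oneDim (fun _ => ({1} : Finset ℕ)) = fun _ => {0} := by
  funext i; fin_cases i; decide

lemma num_A1 (S : Fin 1 → Finset ℕ) : interactionNum A1 oneDim oneDim S = 1 := by
  simp [interactionNum, A1]
  exact Finset.prod_of_isEmpty (ι := Empty) _

lemma den0 : interactionDen oneDim oneDim (fun _ => ({0} : Finset ℕ)) =
    X ((0 : Fin 1), 1) - X (0, 0) := by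
  have h := compl0
  simp [interactionDen, h]

lemma den1 : interactionDen oneDim oneDim (fun _ => ({1} : Finset ℕ)) =
    X ((0 : Fin 1), 0) - X (0, 1) := by
  have h := compl1
  simp [interactionDen, h]

lemma hxy_ne : (X ((0 : Fin 1), 1) - X (0, 0) : PolyQ 1) ≠ 0 := by
  rw [sub_ne_zero]
  exact fun h => by simpa using (MvPolynomial.X_injective h)

lemma ratEq (p q : ℕ) :
    cohaMulRat A1 oneDim oneDim (psi p) (psi q) =
      algebraMap (PolyQ 1) (FractionRing (PolyQ 1))
          (X ((0 : Fin 1), 0) ^ p * X (0, 1) ^ q - X (0, 0) ^ q * X (0, 1) ^ p) /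
        algebraMap (PolyQ 1) (FractionRing (PolyQ 1)) (X ((0 : Fin 1), 1) - X (0, 0)) := by
  have hne : (fun _ => ({0} : Finset ℕ)) ≠ (fun _ => ({1} : Finset ℕ) : Fin 1 → Finset ℕ) := by
    decide
  rw [cohaMulRat, shuffles_one, Finset.sum_insert (by simpa using hne), Finset.sum_singleton,
    substAlong_psi, substAlong_psi, substAlong_psi, substAlong_psi, compl0, compl1,
    num_A1, num_A1, den0, den1]
  have h0 : ((({0} : Finset ℕ)).sort (· ≤ ·)).getD 0 0 = 0 := by
    rw [Finset.sort_singleton]; rfl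
  have h1 : ((({1} : Finset ℕ)).sort (· ≤ ·)).getD 0 0 = 1 := by
    rw [Finset.sort_singleton]; rfl
  rw [h0, h1]
  rw [show (X ((0:Fin 1),0) - X (0,1) : PolyQ 1) = -(X ((0:Fin 1),1) - X (0,0)) by ring]
  rw [mul_one, mul_one, map_neg, div_neg, ← sub_eq_add_neg, div_sub_div_same, ← map_sub]
  congr 1
  ring_nf

lemma dvd_aux (p q : ℕ) (h : p ≤ q) :
    (X ((0 : Fin 1), 1) - X (0, 0) : PolyQ 1) ∣
      X ((0 : Fin 1), 0) ^ p * X (0, 1) ^ q - X (0, 0) ^ q * X (0, 1) ^ p := by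
  obtain ⟨k, rfl⟩ := Nat.exists_eq_add_of_le h
  have hd := sub_dvd_pow_sub_pow (X ((0 : Fin 1), 1) : PolyQ 1) (X (0, 0)) k
  have : (X ((0:Fin 1),0) ^ p * X (0,1) ^ (p + k) - X (0,0) ^ (p + k) * X (0,1) ^ p : PolyQ 1)
      = (X (0,0) ^ p * X (0,1) ^ p) * (X ((0:Fin 1),1) ^ k - X (0,0) ^ k) := by ring
  rw [this]
  exact Dvd.dvd.mul_left hd _

lemma dvd_num (p q : ℕ) :
    (X ((0 : Fin 1), 1) - X (0, 0) : PolyQ 1) ∣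
      X ((0 : Fin 1), 0) ^ p * X (0, 1) ^ q - X (0, 0) ^ q * X (0, 1) ^ p := by
  rcases le_total p q with h | h
  · exact dvd_aux p q h
  · have := dvd_aux q p h
    rw [show (X ((0:Fin 1),0) ^ p * X (0,1) ^ q - X (0,0) ^ q * X (0,1) ^ p : PolyQ 1)
        = -(X ((0:Fin 1),0) ^ q * X (0,1) ^ p - X (0,0) ^ p * X (0,1) ^ q) by ring]
    exact dvd_neg.mpr this

lemma exists_rep (p q : ℕ) :
    ∃ P : PolyQ 1, algebraMap (PolyQ 1) (FractionRing (PolyQ 1)) P =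
      cohaMulRat A1 oneDim oneDim (psi p) (psi q) := by
  obtain ⟨P, hP⟩ := dvd_num p q
  refine ⟨P, ?_⟩
  have hden : algebraMap (PolyQ 1) (FractionRing (PolyQ 1)) (X ((0:Fin 1),1) - X (0,0)) ≠ 0 :=
    (map_ne_zero_iff _ (IsFractionRing.injective _ _)).mpr hxy_ne
  rw [ratEq, hP, map_mul, mul_comm, mul_div_assoc, div_self hden, mul_one]

lemma rat_add (p q : ℕ) :
    cohaMulRat A1 oneDim oneDim (psi p) (psi q) +
      cohaMulRat A1 oneDim oneDim (psi q) (psi p) = 0 := by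
  rw [ratEq, ratEq, ← add_div, ← map_add,
    show (X ((0:Fin 1),0) ^ p * X (0,1) ^ q - X (0,0) ^ q * X (0,1) ^ p
      + (X ((0:Fin 1),0) ^ q * X (0,1) ^ p - X (0,0) ^ p * X (0,1) ^ q) : PolyQ 1) = 0 by ring,
    map_zero, zero_div]

lemma cohaMul_rep (p q : ℕ) :
    algebraMap (PolyQ 1) (FractionRing (PolyQ 1)) (cohaMul A1 oneDim oneDim (psi p) (psi q)) =
      cohaMulRat A1 oneDim oneDim (psi p) (psi q) := by
  rw [cohaMul, dif_pos (exists_rep p q)]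
  exact (exists_rep p q).choose_spec

/-- In `ℋ(A₁)` the elements `ψ_p = x₁^p ∈ ℋ₁(A₁)` anticommute,
and in particular square to zero. -/
theorem psi_anticommute (p q : ℕ) :
    cohaMul A1 oneDim oneDim (psi p) (psi q) = -cohaMul A1 oneDim oneDim (psi q) (psi p) ∧
      cohaMul A1 oneDim oneDim (psi p) (psi p) = 0 := by
  have inj := IsFractionRing.injective (PolyQ 1) (FractionRing (PolyQ 1))
  constructor
  · apply inj
    rw [map_neg, cohaMul_rep, cohaMul_rep, eq_neg_iff_add_eq_zero]
    exact rat_add p q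
  · apply inj
    rw [cohaMul_rep, map_zero]
    exact add_self_eq_zero.mp (rat_add p p)
end
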